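/- arXiv:1311.0658 — 4 statements merged into one kernel-verified Lean document; each statement's English description precedes it below -/
import Mathlib

section
/- Let α be irrational, V ∈ SL(2,ℝ) a constant matrix, k a nonzero integer, and D a nonzero 2×2 complex matrix satisfying D e^{πikα} = V D V^{-1}. Then V is conjugate (in SL(2,ℂ)) to the rotation R_θ = [[cos 2πθ, −sin 2πθ],[sin 2πθ, cos 2πθ]] for some θ with 2θ = ±kα/2 + ℓ for some integer ℓ. -/
open Matrix

lemma conj_lemma (W M G R P : Matrix (Fin 2) (Fin 2) ℂ) (hM : IsUnit M.det) (hP : IsUnit P.det)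
    (hWM : W * M = M * G) (hRP : R * P = P * G) :
    IsUnit (M * P⁻¹).det ∧ W = (M * P⁻¹) * R * (M * P⁻¹)⁻¹ := by
  constructor
  · rw [Matrix.det_mul, Matrix.det_nonsing_inv]
    rw [Ring.inverse_eq_inv]; exact hM.mul hP.inv
  · have h1 : (M * P⁻¹)⁻¹ = P * M⁻¹ := by
      rw [Matrix.mul_inv_rev, Matrix.nonsing_inv_nonsing_inv _ hP]
    have hR : R = P * G * P⁻¹ := by
      rw [← hRP, mul_assoc, Matrix.mul_nonsing_inv _ hP, mul_one]
    rw [h1, hR]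
    calc W = W * M * M⁻¹ := by rw [Matrix.mul_nonsing_inv_cancel_right _ _ hM]
    _ = M * G * M⁻¹ := by rw [hWM]
    _ = M * P⁻¹ * (P * G * P⁻¹) * (P * M⁻¹) := by
        simp only [mul_assoc]
        rw [← mul_assoc P⁻¹ P, Matrix.nonsing_inv_mul _ hP, one_mul,
          ← mul_assoc P⁻¹ P, Matrix.nonsing_inv_mul _ hP, one_mul]

lemma eigenM (W : Matrix (Fin 2) (Fin 2) ℂ) (μ ν : ℂ) (hdet : W.det = 1)
    (hμν : μ * ν = 1) (hne : μ ≠ ν) (htr : W.trace = μ + ν) :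
    ∃ M : Matrix (Fin 2) (Fin 2) ℂ, IsUnit M.det ∧ W * M = M * !![μ, 0; 0, ν] := by
  rw [Matrix.det_fin_two] at hdet
  rw [Matrix.trace_fin_two] at htr
  by_cases hq : W 0 1 ≠ 0
  · refine ⟨!![W 0 1, W 0 1; μ - W 0 0, ν - W 0 0], ?_, ?_⟩
    · rw [Matrix.det_fin_two_of, isUnit_iff_ne_zero,
        show W 0 1 * (ν - W 0 0) - W 0 1 * (μ - W 0 0) = W 0 1 * (ν - μ) from by ring]
      exact mul_ne_zero hq (sub_ne_zero.mpr (Ne.symm hne))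
    · ext i j
      fin_cases i <;> fin_cases j <;>
        simp [Matrix.mul_apply, Fin.sum_univ_two] <;>
        first
          | ring1
          | (linear_combination -hdet + μ*htr + hμν)
          | (linear_combination -hdet + ν*htr + hμν)
  · push_neg at hq
    by_cases hr : W 1 0 ≠ 0
    · refine ⟨!![μ - W 1 1, ν - W 1 1; W 1 0, W 1 0], ?_, ?_⟩
      · rw [Matrix.det_fin_two_of, isUnit_iff_ne_zero,
          show (μ - W 1 1) * W 1 0 - (ν - W 1 1) * W 1 0 = W 1 0 * (μ - ν) from by ring]
        exact mul_ne_zero hr (sub_ne_zero.mpr hne)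
      · ext i j
        fin_cases i <;> fin_cases j <;>
          simp [Matrix.mul_apply, Fin.sum_univ_two] <;>
          first
            | ring1
            | (linear_combination -hdet + μ*htr + hμν)
            | (linear_combination -hdet + ν*htr + hμν)
    · push_neg at hr
      have hp : (W 0 0 - μ) * (W 0 0 - ν) = 0 := by
        linear_combination (W 0 0)*htr + hμν - hdet - (W 1 0)*hq
      rcases mul_eq_zero.mp hp with h | h
      · refine ⟨1, by simp, ?_⟩
        ext i j
        fin_cases i <;> fin_cases j <;>
          simp [Matrix.mul_apply, Fin.sum_univ_two, hq, hr] <;>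
          first
            | (linear_combination h)
            | (linear_combination htr - h)
      · refine ⟨!![0, 1; 1, 0], by simp [Matrix.det_fin_two_of], ?_⟩
        ext i j
        fin_cases i <;> fin_cases j <;>
          simp [Matrix.mul_apply, Fin.sum_univ_two, hq, hr] <;>
          first
            | (linear_combination h)
            | (linear_combination htr - h)

lemma CH2 (W : Matrix (Fin 2) (Fin 2) ℂ) (h : W.det = 1) : W * W = W.trace • W - 1 := by
  ext i j
  rw [Matrix.det_fin_two] at h
  fin_cases i <;> fin_cases j <;>
    simp [Matrix.mul_apply, Fin.sum_univ_two, Matrix.trace_fin_two, Matrix.one_apply] <;>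
    first | (linear_combination -h) | ring1

lemma key_scalar (W D : Matrix (Fin 2) (Fin 2) ℂ) (L : ℂ) (hW : W.det = 1) (hL : L ≠ 1)
    (hD : D ≠ 0) (h1 : W * D = L • (D * W)) :
    (1 + L) * (1 + L) = L * (W.trace * W.trace) := by
  set t := W.trace with ht
  have hWu : IsUnit W.det := by rw [hW]; exact isUnit_one
  have hCH := CH2 W hW
  have h2 : (W * W) * D = (L * L) • (D * (W * W)) := by
    calc (W * W) * D = W * (W * D) := by rw [mul_assoc]
    _ = W * (L • (D * W)) := by rw [h1]
    _ = L • (W * (D * W)) := (mul_smul_comm _ _ _)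
    _ = L • ((W * D) * W) := by rw [mul_assoc]
    _ = L • ((L • (D * W)) * W) := by rw [h1]
    _ = L • (L • ((D * W) * W)) := by rw [smul_mul_assoc]
    _ = (L * L) • (D * (W * W)) := by rw [smul_smul, mul_assoc]
  rw [hCH, sub_mul, smul_mul_assoc, one_mul, mul_sub, mul_smul_comm, mul_one] at h2
  have h4 : (L - 1) • ((1 + L) • D - (L * t) • (D * W)) = 0 := by
    linear_combination (norm := module) h2 - t • h1
  have hA : (1 + L) • D - (L * t) • (D * W) = 0 :=
    (smul_eq_zero.mp h4).resolve_left (sub_ne_zero.mpr hL)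
  have hB : (1 + L) • (D * W) - (L * t) • (D * (W * W)) = 0 := by
    have h := congrArg (fun X => X * W) hA
    simpa [sub_mul, smul_mul_assoc, mul_assoc] using h
  rw [hCH, mul_sub, mul_smul_comm, mul_one] at hB
  have h6 : ((1 + L) * (1 + L) - L * (t * t)) • (D * W) = 0 := by
    linear_combination (norm := module) (1 + L) • hB - (L * t) • hA
  have hDW : D * W ≠ 0 := by
    intro h
    apply hD
    calc D = D * (W * W⁻¹) := by rw [Matrix.mul_nonsing_inv _ hWu, mul_one]
    _ = (D * W) * W⁻¹ := by rw [mul_assoc]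
    _ = 0 := by rw [h, zero_mul]
  have := (smul_eq_zero.mp h6).resolve_right hDW
  linear_combination this

lemma rot_conj (W : Matrix (Fin 2) (Fin 2) ℂ) (hdet : W.det = 1) (θ : ℝ) (μ : ℂ)
    (hμ : μ = Complex.exp ((2 * Real.pi * θ : ℝ) * Complex.I))
    (hsq : μ * μ ≠ 1)
    (htr : μ * W.trace = μ * μ + 1) :
    ∃ U : Matrix (Fin 2) (Fin 2) ℂ, IsUnit U.det ∧
      W = U * ((!![Real.cos (2 * Real.pi * θ), -Real.sin (2 * Real.pi * θ);
        Real.sin (2 * Real.pi * θ), Real.cos (2 * Real.pi * θ)]).map Complex.ofReal) * U⁻¹ := by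
  set ν : ℂ := Complex.exp (-((2 * Real.pi * θ : ℝ) : ℂ) * Complex.I) with hν
  have hμν : μ * ν = 1 := by
    rw [hμ, hν, ← Complex.exp_add,
      show ((2 * Real.pi * θ : ℝ) : ℂ) * Complex.I + -((2 * Real.pi * θ : ℝ) : ℂ) * Complex.I
        = 0 from by ring, Complex.exp_zero]
  have hμ0 : μ ≠ 0 := by rw [hμ]; exact Complex.exp_ne_zero _
  have htr' : W.trace = μ + ν := mul_left_cancel₀ hμ0 (by linear_combination htr - hμν)
  have hne : μ ≠ ν := by
    intro h
    rw [← h] at hμν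
    exact hsq hμν
  obtain ⟨M, hM, hWM⟩ := eigenM W μ ν hdet hμν hne htr'
  have hμ' : μ = (Real.cos (2*Real.pi*θ) : ℂ) + (Real.sin (2*Real.pi*θ) : ℂ) * Complex.I := by
    rw [hμ, Complex.exp_mul_I]
    simp [Complex.ofReal_cos, Complex.ofReal_sin]
  have hν' : ν = (Real.cos (2*Real.pi*θ) : ℂ) - (Real.sin (2*Real.pi*θ) : ℂ) * Complex.I := by
    rw [hν, show -((2 * Real.pi * θ : ℝ) : ℂ) * Complex.I
        = ((-(2*Real.pi*θ) : ℝ) : ℂ) * Complex.I from by push_cast; ring, Complex.exp_mul_I]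
    push_cast
    simp [Complex.cos_neg, Complex.sin_neg]
    ring
  have hPdet : IsUnit (!![1, 1; -Complex.I, Complex.I]).det := by
    rw [Matrix.det_fin_two_of, isUnit_iff_ne_zero]
    simp [Complex.I_ne_zero]
  have hRP : ((!![Real.cos (2 * Real.pi * θ), -Real.sin (2 * Real.pi * θ);
        Real.sin (2 * Real.pi * θ), Real.cos (2 * Real.pi * θ)]).map Complex.ofReal)
        * !![1, 1; -Complex.I, Complex.I]
      = !![1, 1; -Complex.I, Complex.I] * !![μ, 0; 0, ν] := by
    ext i j
    fin_cases i <;> fin_cases j <;>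
      simp [Matrix.mul_apply, Fin.sum_univ_two, Matrix.map_apply, hμ', hν'] <;>
      first
        | ring1
        | (linear_combination (Complex.sin (2 * (Real.pi : ℂ) * (θ : ℂ))) * Complex.I_sq)
  obtain ⟨hU, hconj⟩ := conj_lemma W M !![μ, 0; 0, ν] _ !![1, 1; -Complex.I, Complex.I]
    hM hPdet hWM hRP
  exact ⟨M * (!![1, 1; -Complex.I, Complex.I])⁻¹, hU, hconj⟩

/-- if D ≠ 0 satisfies D e^{πikα} = V D V⁻¹ with V ∈ SL(2,ℝ), k ≠ 0 and α
    irrational, then V is conjugate over ℂ to a rotation R_θ with 2θ = ±kα/2 + ℓ. -/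
theorem stmt7 (α : ℝ) (hα : Irrational α) (V : Matrix (Fin 2) (Fin 2) ℝ) (hV : V.det = 1)
    (k : ℤ) (hk : k ≠ 0) (D : Matrix (Fin 2) (Fin 2) ℂ) (hD : D ≠ 0)
    (heq : Complex.exp (Real.pi * Complex.I * (k : ℂ) * (α : ℂ)) • D
      = (V.map (Complex.ofReal)) * D * (V.map (Complex.ofReal))⁻¹) :
    ∃ U : Matrix (Fin 2) (Fin 2) ℂ, IsUnit U.det ∧ ∃ (θ : ℝ) (ℓ : ℤ),
      (2 * θ = (k : ℝ) * α / 2 + ℓ ∨ 2 * θ = -((k : ℝ) * α / 2) + ℓ) ∧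
      V.map (Complex.ofReal) =
        U * ((!![Real.cos (2 * Real.pi * θ), -Real.sin (2 * Real.pi * θ);
                 Real.sin (2 * Real.pi * θ),  Real.cos (2 * Real.pi * θ)]).map Complex.ofReal)
          * U⁻¹ := by
  set W := V.map Complex.ofReal with hWdef
  set L := Complex.exp (Real.pi * Complex.I * (k : ℂ) * (α : ℂ)) with hLdef
  have hW : W.det = 1 := by
    rw [hWdef, Matrix.det_fin_two]
    rw [Matrix.det_fin_two] at hV
    simp only [Matrix.map_apply]
    exact_mod_cast hV
  have hWu : IsUnit W.det := by rw [hW]; exact isUnit_one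
  have h1 : W * D = L • (D * W) := by
    have h := congrArg (fun X => X * W) heq
    simp only [smul_mul_assoc, mul_assoc, Matrix.nonsing_inv_mul _ hWu, mul_one] at h
    exact h.symm
  have hL1 : L ≠ 1 := by
    intro hL
    rw [hLdef, Complex.exp_eq_one_iff] at hL
    obtain ⟨n, hn⟩ := hL
    have hπI : (Real.pi : ℂ) * Complex.I ≠ 0 :=
      mul_ne_zero (by exact_mod_cast Real.pi_ne_zero) Complex.I_ne_zero
    have h2 : (k : ℂ) * α = 2 * n := mul_left_cancel₀ hπI (by linear_combination hn)
    have h3 : (k : ℝ) * α = 2 * n := by exact_mod_cast h2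
    have hk' : (k : ℝ) ≠ 0 := Int.cast_ne_zero.mpr hk
    exact hα ⟨(2 * n) / k, by push_cast; field_simp; linear_combination -h3⟩
  have hkey := key_scalar W D L hW hL1 hD h1
  set t := W.trace with htdef
  set μ₀ := Complex.exp (Real.pi * Complex.I * (k : ℂ) * (α : ℂ) / 2) with hμ₀def
  have hsqL : μ₀ * μ₀ = L := by
    rw [hμ₀def, hLdef, ← Complex.exp_add]
    congr 1
    ring
  have hfac : (μ₀ * t - (μ₀ * μ₀ + 1)) * (μ₀ * t + (μ₀ * μ₀ + 1)) = 0 := by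
    linear_combination (t * t - (μ₀ * μ₀ + L + 2)) * hsqL - hkey
  rcases mul_eq_zero.mp hfac with h | h
  · have hμexp : μ₀ = Complex.exp ((2 * Real.pi * ((k : ℝ) * α / 4) : ℝ) * Complex.I) := by
      rw [hμ₀def]
      congr 1
      push_cast
      ring
    have hsqne : μ₀ * μ₀ ≠ 1 := by rw [hsqL]; exact hL1
    have hμt : μ₀ * W.trace = μ₀ * μ₀ + 1 := by linear_combination h
    obtain ⟨U, hU, hconj⟩ := rot_conj W hW ((k : ℝ) * α / 4) μ₀ hμexp hsqne hμt
    exact ⟨U, hU, (k : ℝ) * α / 4, 0, Or.inl (by push_cast; ring), hconj⟩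
  · have hμexp : -μ₀ = Complex.exp ((2 * Real.pi * ((k : ℝ) * α / 4 + 1/2) : ℝ) * Complex.I) := by
      rw [show ((2 * Real.pi * ((k : ℝ) * α / 4 + 1/2) : ℝ) : ℂ) * Complex.I
          = Real.pi * Complex.I * (k : ℂ) * (α : ℂ) / 2 + Real.pi * Complex.I from by
            push_cast; ring, Complex.exp_add, Complex.exp_pi_mul_I, hμ₀def]
      ring
    have hsqne : (-μ₀) * (-μ₀) ≠ 1 := by
      rw [show (-μ₀) * (-μ₀) = μ₀ * μ₀ from by ring, hsqL]
      exact hL1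
    have hμt : (-μ₀) * W.trace = (-μ₀) * (-μ₀) + 1 := by linear_combination -h
    obtain ⟨U, hU, hconj⟩ := rot_conj W hW ((k : ℝ) * α / 4 + 1/2) (-μ₀) hμexp hsqne hμt
    exact ⟨U, hU, (k : ℝ) * α / 4 + 1/2, 1, Or.inl (by push_cast; ring), hconj⟩
end

section
/- Let α be irrational, A : ℝ/ℤ → SL(2,ℝ) analytic in |Im x| < η, and suppose there exists B : ℝ/2ℤ → SL(2,ℝ) analytic in |Im x| < η with B(x+α)^{-1}A(x)B(x) constant. Then there exists B′ : ℝ/ℤ → PSL(2,ℝ) (i.e., B′(x+1) = ±B′(x)), analytic in |Im x| < η, such that B′(x+α)^{-1}A(x)B′(x) is constant. -/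
open Matrix

lemma auxConst {ψ : ℝ → ℂ} (hc : Continuous ψ) {a : ℝ} (ha : Irrational a)
    (h1 : ∀ x, ψ (x + a) = ψ x) (h2 : ∀ x, ψ (x + 2) = ψ x) (x : ℝ) : ψ x = ψ 0 := by
  set G : AddSubgroup ℝ :=
    { carrier := {t | ∀ y, ψ (y + t) = ψ y}
      zero_mem' := by intro y; simp
      add_mem' := by
        intro s t hs ht y
        rw [← add_assoc, ht, hs]
      neg_mem' := by
        intro t ht y
        have h := ht (y + -t)
        rw [add_assoc, neg_add_cancel, add_zero] at h
        exact h.symm } with hGdef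
  have haG : a ∈ G := h1
  have h2G : (2 : ℝ) ∈ G := h2
  rcases G.dense_or_cyclic with hd | ⟨g, hg⟩
  · obtain ⟨u, hu, hlim⟩ := mem_closure_iff_seq_limit.mp (hd x)
    have h0 : ∀ n, ψ (u n) = ψ 0 := by
      intro n
      have := (hu n) 0
      simpa using this
    have hψ : Filter.Tendsto (fun n => ψ (u n)) Filter.atTop (nhds (ψ x)) :=
      (hc.continuousAt.tendsto).comp hlim
    have hψ' : Filter.Tendsto (fun n => ψ (u n)) Filter.atTop (nhds (ψ 0)) := by
      simpa [h0] using (tendsto_const_nhds : Filter.Tendsto (fun _ : ℕ => ψ 0) _ _)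
    exact tendsto_nhds_unique hψ hψ'
  · exfalso
    rw [hg] at haG h2G
    obtain ⟨m, hm⟩ := AddSubgroup.mem_closure_singleton.mp haG
    obtain ⟨n, hn⟩ := AddSubgroup.mem_closure_singleton.mp h2G
    rw [zsmul_eq_mul] at hm hn
    have hn0 : (n : ℝ) ≠ 0 := by
      intro h
      rw [h, zero_mul] at hn
      norm_num at hn
    have hg' : g = 2 / (n : ℝ) := by field_simp; linarith [hn]
    exact ha ⟨2 * m / n, by push_cast; rw [← hm, hg']; ring⟩

lemma auxMemR {η : ℝ} (hη : 0 < η) (x : ℝ) : (x : ℂ) ∈ {z : ℂ | |z.im| < η} := by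
  simp [Complex.ofReal_im, hη]

lemma auxMemAdd {η : ℝ} (hη : 0 < η) (x y : ℝ) : (x : ℂ) + (y : ℂ) ∈ {z : ℂ | |z.im| < η} := by
  simp [Complex.ofReal_im, hη]

lemma auxAB (α η : ℝ) (hη : 0 < η)
    (A B : ℂ → Matrix (Fin 2) (Fin 2) ℂ)
    (hBdet : ∀ z ∈ {z : ℂ | |z.im| < η}, (B z).det = 1)
    (V : Matrix (Fin 2) (Fin 2) ℂ)
    (hV : ∀ x : ℝ, (B ((x : ℂ) + (α : ℂ)))⁻¹ * A x * B x = V) :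
    ∀ x : ℝ, A x * B x = B ((x : ℂ) + (α : ℂ)) * V := by
  intro x
  have hdet : IsUnit (B ((x : ℂ) + (α : ℂ))).det := by
    rw [hBdet _ (auxMemAdd hη x α)]; exact isUnit_one
  have h := hV x
  calc A (x : ℂ) * B (x : ℂ)
      = (B ((x : ℂ) + (α : ℂ)) * (B ((x : ℂ) + (α : ℂ)))⁻¹) * A (x : ℂ) * B (x : ℂ) := by
        rw [Matrix.mul_nonsing_inv _ hdet, one_mul]
    _ = B ((x : ℂ) + (α : ℂ)) * ((B ((x : ℂ) + (α : ℂ)))⁻¹ * A (x : ℂ) * B (x : ℂ)) := by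
        rw [Matrix.mul_assoc, Matrix.mul_assoc, Matrix.mul_assoc]
    _ = B ((x : ℂ) + (α : ℂ)) * V := by rw [h]

lemma auxDetV (α η : ℝ) (hη : 0 < η)
    (A B : ℂ → Matrix (Fin 2) (Fin 2) ℂ)
    (hAdet : ∀ z ∈ {z : ℂ | |z.im| < η}, (A z).det = 1)
    (hBdet : ∀ z ∈ {z : ℂ | |z.im| < η}, (B z).det = 1)
    (V : Matrix (Fin 2) (Fin 2) ℂ)
    (hV : ∀ x : ℝ, (B ((x : ℂ) + (α : ℂ)))⁻¹ * A x * B x = V) :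
    V.det = 1 := by
  have hmem0 : (0 : ℂ) ∈ {z : ℂ | |z.im| < η} := by simp [hη]
  have hmemα : (α : ℂ) ∈ {z : ℂ | |z.im| < η} := auxMemR hη α
  have h := hV 0
  push_cast at h
  rw [zero_add] at h
  rw [← h, Matrix.det_mul, Matrix.det_mul, Matrix.det_nonsing_inv, hBdet _ hmemα,
    hAdet _ hmem0, hBdet _ hmem0]
  simp

lemma auxConvex (η : ℝ) : Convex ℝ {z : ℂ | |z.im| < η} := by
  have h : {z : ℂ | |z.im| < η} = Complex.imLm ⁻¹' (Set.Ioo (-η) η) := by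
    ext z
    simp [abs_lt, Complex.imLm, and_comm]
  rw [h]
  exact (convex_Ioo _ _).linear_preimage _

lemma auxKey (α η : ℝ) (hα : Irrational α) (hη : 0 < η)
    (A B : ℂ → Matrix (Fin 2) (Fin 2) ℂ)
    (hAper : ∀ z : ℂ, A (z + 1) = A z)
    (hAdet : ∀ z ∈ {z : ℂ | |z.im| < η}, (A z).det = 1)
    (hBan : ∀ i j, AnalyticOnNhd ℂ (fun z => B z i j) {z : ℂ | |z.im| < η})
    (hBper : ∀ z : ℂ, B (z + 2) = B z)
    (hBdet : ∀ z ∈ {z : ℂ | |z.im| < η}, (B z).det = 1)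
    (V : Matrix (Fin 2) (Fin 2) ℂ)
    (hV : ∀ x : ℝ, (B ((x : ℂ) + (α : ℂ)))⁻¹ * A x * B x = V) (s : ℂ) :
    ∀ z ∈ {z : ℂ | |z.im| < η}, (B z + s • B (z + 1)).det = (B 0 + s • B 1).det := by
  have hAB := auxAB α η hη A B hBdet V hV
  have hdV := auxDetV α η hη A B hAdet hBdet V hV
  set Bt : ℂ → Matrix (Fin 2) (Fin 2) ℂ := fun z => B z + s • B (z + 1) with hBtdef
  -- analyticity of entries of Bt
  have hshift : ∀ i j, AnalyticOnNhd ℂ (fun z => B (z + 1) i j) {z : ℂ | |z.im| < η} := by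
    intro i j
    have hmap : Set.MapsTo (fun z : ℂ => z + 1) {z : ℂ | |z.im| < η} {z : ℂ | |z.im| < η} := by
      intro z hz
      simpa using hz
    have := (hBan i j).comp (analyticOnNhd_id.add analyticOnNhd_const) hmap
    exact this
  have hBtan : ∀ i j, AnalyticOnNhd ℂ (fun z => Bt z i j) {z : ℂ | |z.im| < η} := by
    intro i j
    have hmul : AnalyticOnNhd ℂ (fun z => s * B (z + 1) i j) {z : ℂ | |z.im| < η} :=
      analyticOnNhd_const.mul (hshift i j)
    have hadd : AnalyticOnNhd ℂ (fun z => B z i j + s * B (z + 1) i j) {z : ℂ | |z.im| < η} :=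
      (hBan i j).add hmul
    simpa [hBtdef, Matrix.add_apply, Matrix.smul_apply, smul_eq_mul] using hadd
  have hφan : AnalyticOnNhd ℂ (fun z => (Bt z).det) {z : ℂ | |z.im| < η} := by
    have h : (fun z => (Bt z).det)
        = fun z => Bt z 0 0 * Bt z 1 1 - Bt z 0 1 * Bt z 1 0 :=
      funext fun z => Matrix.det_fin_two _
    rw [h]
    exact ((hBtan 0 0).mul (hBtan 1 1)).sub ((hBtan 0 1).mul (hBtan 1 0))
  -- periodicity of Bt
  have hBt2 : ∀ z : ℂ, Bt (z + 2) = Bt z := by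
    intro z
    have e1 : z + 2 + 1 = z + 1 + 2 := by ring
    simp only [hBtdef]
    rw [hBper z, e1, hBper (z + 1)]
  -- invariance of det Bt under translation by α on ℝ
  have hABt : ∀ x : ℝ, A x * Bt x = Bt ((x : ℂ) + (α : ℂ)) * V := by
    intro x
    have h1 := hAB x
    have h2 := hAB (x + 1)
    push_cast at h2
    rw [hAper (x : ℂ)] at h2
    have e : (x : ℂ) + 1 + (α : ℂ) = (x : ℂ) + (α : ℂ) + 1 := by ring
    rw [e] at h2
    simp only [hBtdef]
    rw [Matrix.mul_add, Matrix.mul_smul, h1, h2, Matrix.add_mul, Matrix.smul_mul]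
  have hinv : ∀ x : ℝ, (Bt ((x : ℂ) + (α : ℂ))).det = (Bt (x : ℂ)).det := by
    intro x
    have h := congrArg Matrix.det (hABt x)
    rw [Matrix.det_mul, Matrix.det_mul, hAdet _ (auxMemR hη x), hdV, one_mul, mul_one] at h
    exact h.symm
  -- det Bt constant on ℝ
  have hψc : Continuous (fun x : ℝ => (Bt (x : ℂ)).det) := by
    rw [continuous_iff_continuousAt]
    intro x
    exact ((hφan _ (auxMemR hη x)).continuousAt).comp Complex.continuous_ofReal.continuousAt
  have hper1 : ∀ x : ℝ, (Bt ((x + α : ℝ) : ℂ)).det = (Bt (x : ℂ)).det := by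
    intro x
    push_cast
    exact hinv x
  have hper2 : ∀ x : ℝ, (Bt ((x + 2 : ℝ) : ℂ)).det = (Bt (x : ℂ)).det := by
    intro x
    push_cast
    rw [hBt2]
  have hconstR : ∀ x : ℝ, (Bt (x : ℂ)).det = (Bt ((0 : ℝ) : ℂ)).det :=
    auxConst hψc hα hper1 hper2
  -- identity theorem
  have hmem0 : (0 : ℂ) ∈ {z : ℂ | |z.im| < η} := by simp [hη]
  have hpre : IsPreconnected {z : ℂ | |z.im| < η} := (auxConvex η).isPreconnected
  have hu : Filter.Tendsto (fun n : ℕ => ((((n : ℝ) + 1)⁻¹ : ℝ) : ℂ)) Filter.atTop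
      (nhdsWithin 0 {(0 : ℂ)}ᶜ) := by
    rw [tendsto_nhdsWithin_iff]
    constructor
    · have : Filter.Tendsto (fun n : ℕ => (((n : ℝ) + 1)⁻¹ : ℝ)) Filter.atTop (nhds 0) :=
        tendsto_one_div_add_atTop_nhds_zero_nat.congr (by intro n; rw [one_div])
      have h2 := (Complex.continuous_ofReal.tendsto 0).comp this
      simpa [Function.comp_def] using h2
    · filter_upwards with n
      simp only [Set.mem_compl_iff, Set.mem_singleton_iff]
      intro h
      have : (((n : ℝ) + 1)⁻¹ : ℝ) = 0 := by exact_mod_cast h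
      have hpos : (0 : ℝ) < ((n : ℝ) + 1)⁻¹ := by positivity
      linarith
  have hfreq : ∃ᶠ z in nhdsWithin 0 {(0 : ℂ)}ᶜ,
      (fun z => (Bt z).det) z = (fun _ => (Bt ((0 : ℝ) : ℂ)).det) z := by
    apply hu.frequently
    apply Filter.Frequently.of_forall
    intro n
    exact hconstR (((n : ℝ) + 1)⁻¹)
  have heq := hφan.eqOn_of_preconnected_of_frequently_eq analyticOnNhd_const hpre hmem0 hfreq
  intro z hz
  have h := heq hz
  simp only at h
  rw [h]
  simp [hBtdef]

lemma auxMain (α η : ℝ) (hα : Irrational α) (hη : 0 < η)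
    (A B : ℂ → Matrix (Fin 2) (Fin 2) ℂ)
    (hAper : ∀ z : ℂ, A (z + 1) = A z)
    (hAdet : ∀ z ∈ {z : ℂ | |z.im| < η}, (A z).det = 1)
    (hBan : ∀ i j, AnalyticOnNhd ℂ (fun z => B z i j) {z : ℂ | |z.im| < η})
    (hBper : ∀ z : ℂ, B (z + 2) = B z)
    (hBreal : ∀ (x : ℝ) (i j : Fin 2), (B x i j).im = 0)
    (hBdet : ∀ z ∈ {z : ℂ | |z.im| < η}, (B z).det = 1)
    (V : Matrix (Fin 2) (Fin 2) ℂ)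
    (hV : ∀ x : ℝ, (B ((x : ℂ) + (α : ℂ)))⁻¹ * A x * B x = V)
    (s : ℂ) (hs : s = 1 ∨ s = -1)
    (hpos : 0 < ((B 0 + s • B 1).det).re)
    (him : ((B 0 + s • B 1).det).im = 0) :
    ∃ B' : ℂ → Matrix (Fin 2) (Fin 2) ℂ,
      (∀ i j, AnalyticOnNhd ℂ (fun z => B' z i j) {z : ℂ | |z.im| < η}) ∧
      (∀ (x : ℝ) (i j : Fin 2), (B' x i j).im = 0) ∧
      (∀ z ∈ {z : ℂ | |z.im| < η}, (B' z).det = 1) ∧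
      (∀ z : ℂ, B' (z + 1) = B' z ∨ B' (z + 1) = -B' z) ∧
      ∃ V' : Matrix (Fin 2) (Fin 2) ℂ,
        ∀ x : ℝ, (B' ((x : ℂ) + (α : ℂ)))⁻¹ * A x * B' x = V' := by
  have hAB := auxAB α η hη A B hBdet V hV
  have hkey := auxKey α η hα hη A B hAper hAdet hBan hBper hBdet V hV s
  have hs' : s.im = 0 := by rcases hs with rfl | rfl <;> simp
  set c : ℂ := (B 0 + s • B 1).det with hcdef
  set r : ℝ := Real.sqrt (c.re)⁻¹ with hrdef
  have hr2 : r ^ 2 = (c.re)⁻¹ := Real.sq_sqrt (by positivity)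
  set B' : ℂ → Matrix (Fin 2) (Fin 2) ℂ := fun z => (r : ℂ) • (B z + s • B (z + 1)) with hB'def
  -- determinant
  have hdet' : ∀ z ∈ {z : ℂ | |z.im| < η}, (B' z).det = 1 := by
    intro z hz
    have hc : c = ((c.re : ℝ) : ℂ) := by
      apply Complex.ext <;> simp [him]
    simp only [hB'def]
    rw [Matrix.det_smul, hkey z hz, Fintype.card_fin, hc]
    rw [← Complex.ofReal_pow, ← Complex.ofReal_mul, hr2,
      inv_mul_cancel₀ (ne_of_gt hpos), Complex.ofReal_one]
  -- analyticity
  have han : ∀ i j, AnalyticOnNhd ℂ (fun z => B' z i j) {z : ℂ | |z.im| < η} := by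
    intro i j
    have hmap : Set.MapsTo (fun z : ℂ => z + 1) {z : ℂ | |z.im| < η} {z : ℂ | |z.im| < η} := by
      intro z hz
      simpa using hz
    have hshift : AnalyticOnNhd ℂ (fun z => B (z + 1) i j) {z : ℂ | |z.im| < η} := by
      have := (hBan i j).comp (analyticOnNhd_id.add analyticOnNhd_const) hmap
      exact this
    have hmul : AnalyticOnNhd ℂ (fun z => s * B (z + 1) i j) {z : ℂ | |z.im| < η} :=
      analyticOnNhd_const.mul hshift
    have hadd : AnalyticOnNhd ℂ (fun z => B z i j + s * B (z + 1) i j) {z : ℂ | |z.im| < η} :=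
      (hBan i j).add hmul
    have hfin : AnalyticOnNhd ℂ (fun z => (r : ℂ) * B z i j + (r : ℂ) * (s * B (z + 1) i j))
        {z : ℂ | |z.im| < η} :=
      (analyticOnNhd_const.mul (hBan i j)).add (analyticOnNhd_const.mul hmul)
    simpa [hB'def, Matrix.smul_apply, Matrix.add_apply, smul_eq_mul, mul_add] using hfin
  -- reality
  have hreal : ∀ (x : ℝ) (i j : Fin 2), (B' x i j).im = 0 := by
    intro x i j
    have hB1x : (B ((x : ℂ) + 1) i j).im = 0 := by
      have := hBreal (x + 1) i j
      push_cast at this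
      exact this
    simp only [hB'def, Matrix.smul_apply, Matrix.add_apply, smul_eq_mul]
    rw [Complex.mul_im, Complex.add_im, Complex.mul_im, hBreal x i j, hB1x, hs']
    simp
  -- quasi-periodicity
  have hper : ∀ z : ℂ, B' (z + 1) = B' z ∨ B' (z + 1) = -B' z := by
    intro z
    have e : z + 1 + 1 = z + 2 := by ring
    rcases hs with rfl | rfl
    · left
      ext i j
      simp only [hB'def, Matrix.smul_apply, Matrix.add_apply, smul_eq_mul]
      rw [e, hBper]
      ring
    · right
      ext i j
      simp only [hB'def, Matrix.smul_apply, Matrix.add_apply, Matrix.neg_apply, smul_eq_mul]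
      rw [e, hBper]
      ring
  refine ⟨B', han, hreal, hdet', hper, V, ?_⟩
  intro x
  have h1 := hAB x
  have h2 := hAB (x + 1)
  push_cast at h2
  rw [hAper (x : ℂ)] at h2
  have e : (x : ℂ) + 1 + (α : ℂ) = (x : ℂ) + (α : ℂ) + 1 := by ring
  rw [e] at h2
  have hABt : A (x : ℂ) * B' (x : ℂ) = B' ((x : ℂ) + (α : ℂ)) * V := by
    calc A (x : ℂ) * B' (x : ℂ)
        = (r : ℂ) • (A (x : ℂ) * (B (x : ℂ) + s • B ((x : ℂ) + 1))) := Matrix.mul_smul _ _ _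
      _ = (r : ℂ) • (A (x : ℂ) * B (x : ℂ) + s • (A (x : ℂ) * B ((x : ℂ) + 1))) := by
          rw [Matrix.mul_add, Matrix.mul_smul]
      _ = (r : ℂ) • (B ((x : ℂ) + (α : ℂ)) * V + s • (B ((x : ℂ) + (α : ℂ) + 1) * V)) := by
          rw [h1, h2]
      _ = ((r : ℂ) • (B ((x : ℂ) + (α : ℂ)) + s • B ((x : ℂ) + (α : ℂ) + 1))) * V := by
          rw [Matrix.smul_mul, Matrix.add_mul, Matrix.smul_mul]
      _ = B' ((x : ℂ) + (α : ℂ)) * V := rfl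
  have hu : IsUnit (B' ((x : ℂ) + (α : ℂ))).det := by
    rw [hdet' _ (auxMemAdd hη x α)]
    exact isUnit_one
  rw [Matrix.mul_assoc, hABt, ← Matrix.mul_assoc, Matrix.nonsing_inv_mul _ hu, one_mul]

/-- if an analytic SL(2,ℝ) cocycle A on ℝ/ℤ is conjugated to a constant by an
    analytic B : ℝ/2ℤ → SL(2,ℝ) on the strip |Im z| < η, then it is conjugated to a constant
    by an analytic B′ : ℝ/ℤ → PSL(2,ℝ) (i.e. B′(x+1) = ±B′(x)) on the same strip. -/
theorem stmt8 (α η : ℝ) (hα : Irrational α) (hη : 0 < η)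
    (A : ℂ → Matrix (Fin 2) (Fin 2) ℂ)
    (hAan : ∀ i j, AnalyticOnNhd ℂ (fun z => A z i j) {z : ℂ | |z.im| < η})
    (hAper : ∀ z : ℂ, A (z + 1) = A z)
    (hAreal : ∀ (x : ℝ) (i j : Fin 2), (A x i j).im = 0)
    (hAdet : ∀ z ∈ {z : ℂ | |z.im| < η}, (A z).det = 1)
    (B : ℂ → Matrix (Fin 2) (Fin 2) ℂ)
    (hBan : ∀ i j, AnalyticOnNhd ℂ (fun z => B z i j) {z : ℂ | |z.im| < η})
    (hBper : ∀ z : ℂ, B (z + 2) = B z)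
    (hBreal : ∀ (x : ℝ) (i j : Fin 2), (B x i j).im = 0)
    (hBdet : ∀ z ∈ {z : ℂ | |z.im| < η}, (B z).det = 1)
    (hconst : ∃ V : Matrix (Fin 2) (Fin 2) ℂ,
      ∀ x : ℝ, (B ((x : ℂ) + (α : ℂ)))⁻¹ * A x * B x = V) :
    ∃ B' : ℂ → Matrix (Fin 2) (Fin 2) ℂ,
      (∀ i j, AnalyticOnNhd ℂ (fun z => B' z i j) {z : ℂ | |z.im| < η}) ∧
      (∀ (x : ℝ) (i j : Fin 2), (B' x i j).im = 0) ∧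
      (∀ z ∈ {z : ℂ | |z.im| < η}, (B' z).det = 1) ∧
      (∀ z : ℂ, B' (z + 1) = B' z ∨ B' (z + 1) = -B' z) ∧
      ∃ V' : Matrix (Fin 2) (Fin 2) ℂ,
        ∀ x : ℝ, (B' ((x : ℂ) + (α : ℂ)))⁻¹ * A x * B' x = V' := by
  obtain ⟨V, hV⟩ := hconst
  have hmem0 : (0 : ℂ) ∈ {z : ℂ | |z.im| < η} := by simp [hη]
  have hmem1 : (1 : ℂ) ∈ {z : ℂ | |z.im| < η} := by simp [hη]
  have h0 : (B 0).det = 1 := hBdet _ hmem0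
  have h1 : (B 1).det = 1 := hBdet _ hmem1
  have hid : (B 0 + (1 : ℂ) • B 1).det + (B 0 + (-1 : ℂ) • B 1).det
      = 2 * (B 0).det + 2 * (B 1).det := by
    simp only [Matrix.det_fin_two, Matrix.add_apply, Matrix.smul_apply, smul_eq_mul]
    ring
  rw [h0, h1] at hid
  norm_num at hid
  have hre : ((B 0 + (1 : ℂ) • B 1).det).re + ((B 0 + (-1 : ℂ) • B 1).det).re = 4 := by
    have := congrArg Complex.re hid
    simpa [Complex.add_re] using this
  have him : ∀ s : ℂ, s.im = 0 → ((B 0 + s • B 1).det).im = 0 := by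
    intro s hs
    have hB0 : ∀ i j, (B (0 : ℂ) i j).im = 0 := by
      intro i j
      have := hBreal 0 i j
      simpa using this
    have hB1 : ∀ i j, (B (1 : ℂ) i j).im = 0 := by
      intro i j
      have := hBreal 1 i j
      simpa using this
    simp [Matrix.det_fin_two, Matrix.add_apply, Matrix.smul_apply, smul_eq_mul,
      Complex.add_im, Complex.sub_im, Complex.mul_im, Complex.add_re, hB0, hB1, hs]
  by_cases hbig : 0 < ((B 0 + (1 : ℂ) • B 1).det).re
  · exact auxMain α η hα hη A B hAper hAdet hBan hBper hBreal hBdet V hV 1 (Or.inl rfl)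
      hbig (him 1 (by simp))
  · have hpos : 0 < ((B 0 + (-1 : ℂ) • B 1).det).re := by
      push_neg at hbig
      linarith
    exact auxMain α η hα hη A B hAper hAdet hBan hBper hBreal hBdet V hV (-1) (Or.inr rfl)
      hpos (him (-1) (by simp))
end

section
/- Let α be irrational, λ ≠ 0, E ∈ ℝ, and let A(x) = S_{λ,E}(x) = [[E − 2λcos 2πx, −1],[1, 0]]. Then the cocycle (α, A) cannot be analytically reduced to ±I: there is no analytic B : ℝ/ℤ → PSL(2,ℝ) with B(x+α)^{-1}A(x)B(x) = I or = −I for all x. -/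
open Matrix MeasureTheory Complex Filter Real Set AddCircle ENNReal


noncomputable def fc (u : ℝ → ℂ) (k : ℤ) : ℂ :=
  (1/2 : ℂ) * ∫ x in (0:ℝ)..2, Complex.exp (-(Real.pi * Complex.I * k * x)) * u x

theorem fc_eq_fourierCoeff (u : ℝ → ℂ) (hp : Function.Periodic u 2) (k : ℤ) :
    haveI : Fact ((0:ℝ) < 2) := ⟨by norm_num⟩
    fourierCoeff (T := 2) (hp.lift) k = fc u k := by
  haveI : Fact ((0:ℝ) < 2) := ⟨by norm_num⟩
  rw [fourierCoeff_eq_intervalIntegral (T := 2) _ k 0]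
  rw [fc]
  norm_num
  apply intervalIntegral.integral_congr
  intro x hx
  simp only []
  congr 1
  rw [← Complex.exp_conj]
  congr 1
  simp [map_div₀, Complex.conj_ofNat]
  field_simp

theorem fc_eq_zero (u : ℝ → ℂ) (hu : Continuous u) (hp : Function.Periodic u 2)
    (h : ∀ k, fc u k = 0) : ∀ x, u x = 0 := by
  haveI : Fact ((0:ℝ) < 2) := ⟨by norm_num⟩
  have hlc : Continuous hp.lift := by rw [continuous_coinduced_dom]; exact hu
  set F : C(AddCircle (2:ℝ), ℂ) := ⟨hp.lift, hlc⟩ with hF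
  have h2 : ∀ k, fourierCoeff (⇑F) k = 0 := by
    intro k; rw [show ⇑F = hp.lift from rfl, fc_eq_fourierCoeff u hp k]; exact h k
  have h3 : fourierBasis.repr (ContinuousMap.toLp (E := ℂ) 2 haarAddCircle ℂ F) = 0 := by
    ext i
    rw [fourierBasis_repr, fourierCoeff_toLp]
    simpa using h2 i
  have h4 : (ContinuousMap.toLp (E := ℂ) 2 haarAddCircle ℂ F) = 0 := by
    apply fourierBasis.repr.injective
    simpa using h3
  have h5 : F = 0 := by
    apply ContinuousMap.toLp_injective (E := ℂ) (𝕜 := ℂ) (p := 2) (haarAddCircle (T := 2))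
    rw [h4]; simp
  intro x
  have := congrFun (congrArg (fun G : C(AddCircle (2:ℝ), ℂ) => ⇑G) h5) (x : AddCircle (2:ℝ))
  simpa [hF] using this

theorem fc_tendsto (u : ℝ → ℂ) (hu : Continuous u) (hp : Function.Periodic u 2) :
    Tendsto (fc u) cofinite (nhds 0) := by
  haveI : Fact ((0:ℝ) < 2) := ⟨by norm_num⟩
  have hlc : Continuous hp.lift := by rw [continuous_coinduced_dom]; exact hu
  set F : C(AddCircle (2:ℝ), ℂ) := ⟨hp.lift, hlc⟩ with hF
  set G := ContinuousMap.toLp (E := ℂ) 2 haarAddCircle ℂ F with hG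
  have hmem : Memℓp (fun k => fourierBasis.repr G k) 2 := (fourierBasis.repr G).property
  have hsum : Summable fun k => ‖fourierBasis.repr G k‖ ^ (2:ℝ≥0∞).toReal :=
    hmem.summable (by norm_num)
  have h0 : Tendsto (fun k => ‖fourierBasis.repr G k‖ ^ (2:ℝ≥0∞).toReal) cofinite (nhds 0) :=
    hsum.tendsto_cofinite_zero
  have h1 : Tendsto (fun k => ‖fourierBasis.repr G k‖) cofinite (nhds 0) := by
    have h0' := (Real.continuous_sqrt.tendsto' 0 0 (by simp)).comp h0
    refine h0'.congr ?_
    intro k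
    simp only [Function.comp]
    rw [show ((2:ℝ≥0∞)).toReal = (2:ℝ) by simp, Real.rpow_two, Real.sqrt_sq (norm_nonneg _)]
  have h2 : ∀ k, fourierBasis.repr G k = fc u k := by
    intro k
    rw [fourierBasis_repr, fourierCoeff_toLp]
    exact fc_eq_fourierCoeff u hp k
  rw [tendsto_zero_iff_norm_tendsto_zero]
  simp_rw [← h2]
  exact h1

theorem eker (k : ℤ) (z : ℂ) :
    Complex.exp (-(Real.pi * Complex.I * k * (z+2))) = Complex.exp (-(Real.pi * Complex.I * k * z)) := by
  have h := Complex.exp_int_mul_two_pi_mul_I (-k)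
  push_cast at h
  rw [show -((Real.pi:ℂ) * Complex.I * k * (z+2)) = -(Real.pi * Complex.I * k * z) + (-k) * (2 * Real.pi * Complex.I) by ring,
    Complex.exp_add, h, mul_one]

theorem fc_intable (u : ℝ → ℂ) (hu : Continuous u) (k : ℤ) (a b : ℝ) :
    IntervalIntegrable (fun x => Complex.exp (-(Real.pi * Complex.I * k * x)) * u x) MeasureTheory.volume a b :=
  (Continuous.mul (by continuity) hu).intervalIntegrable a b

theorem fc_add (u v : ℝ → ℂ) (hu : Continuous u) (hv : Continuous v) (k : ℤ) :
    fc (fun x => u x + v x) k = fc u k + fc v k := by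
  unfold fc
  rw [← mul_add, ← intervalIntegral.integral_add (fc_intable u hu k 0 2) (fc_intable v hv k 0 2)]
  congr 1
  apply intervalIntegral.integral_congr
  intro x hx; simp; ring

theorem fc_const_mul (u : ℝ → ℂ) (c : ℂ) (k : ℤ) :
    fc (fun x => c * u x) k = c * fc u k := by
  unfold fc
  have h : (∫ x in (0:ℝ)..2, Complex.exp (-(Real.pi * Complex.I * k * x)) * (fun x => c * u x) x)
      = ∫ x in (0:ℝ)..2, c * (Complex.exp (-(Real.pi * Complex.I * k * x)) * u x) := by
    apply intervalIntegral.integral_congr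
    intro x hx; simp; ring
  rw [h, intervalIntegral.integral_const_mul]; ring

theorem fc_shift (u : ℝ → ℂ) (hu : Continuous u) (hp : Function.Periodic u 2) (a : ℝ) (k : ℤ) :
    fc (fun x => u (x + a)) k = Complex.exp (Real.pi * Complex.I * k * a) * fc u k := by
  unfold fc
  set G : ℝ → ℂ := fun y => Complex.exp (-(Real.pi * Complex.I * k * ((y : ℂ) - (a : ℂ)))) * u y with hG
  have h1 : (∫ x in (0:ℝ)..2, Complex.exp (-(Real.pi * Complex.I * k * x)) * (fun x => u (x + a)) x)
      = ∫ x in (0:ℝ)..2, G (x + a) := by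
    apply intervalIntegral.integral_congr
    intro x hx
    simp only [hG]
    push_cast
    ring_nf
  rw [h1, intervalIntegral.integral_comp_add_right G a]
  have h2 : ∀ y : ℝ, G y = Complex.exp (Real.pi * Complex.I * k * a) *
      (Complex.exp (-(Real.pi * Complex.I * k * y)) * u y) := by
    intro y
    simp only [hG]
    rw [← mul_assoc, ← Complex.exp_add]
    congr 2
    ring
  simp_rw [h2]
  rw [intervalIntegral.integral_const_mul]
  have hper : Function.Periodic (fun y : ℝ => Complex.exp (-(Real.pi * Complex.I * k * y)) * u y) 2 := by
    intro y
    simp only []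
    push_cast
    rw [eker, hp y]
  have h3 := hper.intervalIntegral_add_eq (0 + a) 0
  simp only [zero_add] at h3
  simp only [zero_add]
  rw [show (2:ℝ) + a = a + 2 by ring, h3]
  ring

theorem fc_cos (u : ℝ → ℂ) (hu : Continuous u) (k : ℤ) :
    fc u (k - 2) + fc u (k + 2) = 2 * fc (fun x => (Real.cos (2 * Real.pi * x) : ℂ) * u x) k := by
  unfold fc
  rw [← mul_add, ← intervalIntegral.integral_add (fc_intable u hu (k-2) 0 2) (fc_intable u hu (k+2) 0 2)]
  have h : (∫ x in (0:ℝ)..2, (Complex.exp (-(Real.pi * Complex.I * (k-2:ℤ) * x)) * u x + Complex.exp (-(Real.pi * Complex.I * (k+2:ℤ) * x)) * u x))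
      = ∫ x in (0:ℝ)..2, 2 * (Complex.exp (-(Real.pi * Complex.I * k * x)) * ((fun x => (Real.cos (2 * Real.pi * x) : ℂ) * u x) x)) := by
    apply intervalIntegral.integral_congr
    intro x hx
    simp only []
    have hcos : ((Real.cos (2 * Real.pi * x)) : ℂ)
        = (Complex.exp (2 * Real.pi * Complex.I * x) + Complex.exp (-(2 * Real.pi * Complex.I * x))) / 2 := by
      rw [show ((Real.cos (2 * Real.pi * x)) : ℂ) = Complex.cos ((2 * Real.pi * x : ℝ) : ℂ) by
        rw [Complex.ofReal_cos], Complex.cos]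
      push_cast; ring_nf
    rw [hcos]
    rw [show (-((Real.pi:ℂ) * Complex.I * ((k-2:ℤ):ℂ) * x)) = -(Real.pi * Complex.I * k * x) + (2 * Real.pi * Complex.I * x) by push_cast; ring]
    rw [show (-((Real.pi:ℂ) * Complex.I * ((k+2:ℤ):ℂ) * x)) = -(Real.pi * Complex.I * k * x) + (-(2 * Real.pi * Complex.I * x)) by push_cast; ring]
    rw [Complex.exp_add, Complex.exp_add]
    ring
  rw [h, intervalIntegral.integral_const_mul]
  ring

theorem coeff_rec (a E' l : ℝ) (u : ℝ → ℂ) (hu : Continuous u) (hp : Function.Periodic u 2)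
    (heq : ∀ x : ℝ, ((E' : ℂ) - 2*(l:ℂ)*(Real.cos (2*Real.pi*x) : ℂ)) * u x = u (x + a) + u (x - a))
    (k : ℤ) :
    (l:ℂ) * (fc u (k+2) + fc u (k-2)) = ((E':ℂ) - 2 * Complex.cos (Real.pi * k * a)) * fc u k := by
  have hfe : (fun x : ℝ => (E':ℂ) * u x + (-(2*l):ℂ) * ((Real.cos (2*Real.pi*x) : ℂ) * u x))
      = fun x : ℝ => u (x + a) + u (x + (-a)) := by
    funext x
    have h := heq x
    rw [show x - a = x + (-a) by ring] at h
    rw [← h]; ring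
  have hL : fc (fun x : ℝ => (E':ℂ) * u x + (-(2*l):ℂ) * ((Real.cos (2*Real.pi*x) : ℂ) * u x)) k
      = (E':ℂ) * fc u k + (-(2*l):ℂ) * fc (fun x => (Real.cos (2*Real.pi*x) : ℂ) * u x) k := by
    rw [fc_add _ _ (by continuity) (by continuity) k, fc_const_mul, fc_const_mul]
  have hR : fc (fun x : ℝ => u (x + a) + u (x + (-a))) k
      = (Complex.exp (Real.pi * Complex.I * k * a) + Complex.exp (-(Real.pi * Complex.I * k * a))) * fc u k := by
    rw [fc_add _ _ (by continuity) (by continuity) k, fc_shift u hu hp a k, fc_shift u hu hp (-a) k]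
    push_cast
    ring_nf
  have hcos2 : Complex.exp (Real.pi * Complex.I * k * a) + Complex.exp (-(Real.pi * Complex.I * k * a))
      = 2 * Complex.cos (Real.pi * k * a) := by
    rw [Complex.cos]
    rw [show ((Real.pi:ℂ) * (k:ℂ) * (a:ℂ) * Complex.I) = (Real.pi:ℂ) * Complex.I * k * a from by ring,
      show (-((Real.pi:ℂ) * (k:ℂ) * (a:ℂ)) * Complex.I) = -((Real.pi:ℂ) * Complex.I * k * a) from by ring]
    ring
  have key := hL.symm.trans ((congrArg (fun w => fc w k) hfe).trans hR)
  have hc := fc_cos u hu k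
  -- key : E' * fc u k - 2l * fc(cos u) k = 2 cos(πka) fc u k
  rw [hcos2] at key
  have : (l:ℂ) * (fc u (k+2) + fc u (k-2)) = (l:ℂ) * (2 * fc (fun x => (Real.cos (2*Real.pi*x) : ℂ) * u x) k) := by
    rw [← hc]; ring
  rw [this]
  linear_combination -key

theorem wr_zero (l : ℝ) (hl : l ≠ 0) (V : ℤ → ℂ) (c d : ℤ → ℂ)
    (hc : ∀ k, (l:ℂ) * (c (k+2) + c (k-2)) = V k * c k)
    (hd : ∀ k, (l:ℂ) * (d (k+2) + d (k-2)) = V k * d k)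
    (hct : Tendsto c cofinite (nhds 0)) (hdt : Tendsto d cofinite (nhds 0)) :
    ∀ k, c k * d (k+2) - c (k+2) * d k = 0 := by
  set w : ℤ → ℂ := fun k => c k * d (k+2) - c (k+2) * d k with hw
  have hlC : (l:ℂ) ≠ 0 := by exact_mod_cast hl
  have hstep : ∀ k, w (k+2) = w k := by
    intro k
    have h1 := hc (k+2)
    have h2 := hd (k+2)
    have e1 : k + 2 + 2 = k + 4 := by ring
    have e2 : k + 2 - 2 = k := by ring
    rw [e1, e2] at h1 h2
    have : (l:ℂ) * (w (k+2) - w k) = 0 := by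
      simp only [hw]
      have e3 : k + 2 + 2 = k + 4 := by ring
      rw [e3]
      linear_combination c (k+2) * h2 - d (k+2) * h1
    rcases mul_eq_zero.mp this with h | h
    · exact absurd h hlC
    · exact sub_eq_zero.mp h
  have hiter : ∀ k, ∀ n : ℕ, w (k + 2*n) = w k := by
    intro k n
    induction n with
    | zero => norm_num
    | succ m ih =>
      have e : k + 2*(((m+1) : ℕ):ℤ) = (k + 2*(m:ℤ)) + 2 := by push_cast; ring
      rw [e, hstep, ih]
  intro k
  have hinj : Function.Injective (fun n : ℕ => k + 2*(n:ℤ)) := by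
    intro m n h; simp only [] at h; omega
  have htc : Tendsto (fun n : ℕ => k + 2*(n:ℤ)) cofinite cofinite := hinj.tendsto_cofinite
  have htc2 : Tendsto (fun n : ℕ => k + 2*(n:ℤ)) atTop cofinite := by
    rwa [← Nat.cofinite_eq_atTop]
  have hwt : Tendsto w cofinite (nhds 0) := by
    have h1 : Tendsto (fun k => c k * d (k+2)) cofinite (nhds 0) := by
      have := hct.mul (hdt.comp (Function.Injective.tendsto_cofinite (add_left_injective (2:ℤ))))
      simpa using this
    have h2 : Tendsto (fun k => c (k+2) * d k) cofinite (nhds 0) := by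
      have := (hct.comp (Function.Injective.tendsto_cofinite (add_left_injective (2:ℤ)))).mul hdt
      simpa using this
    have := h1.sub h2
    simpa using this
  have hconst : Tendsto (fun n : ℕ => w (k + 2*(n:ℤ))) atTop (nhds (w k)) := by
    have : (fun n : ℕ => w (k + 2*(n:ℤ))) = fun _ => w k := funext fun n => hiter k n
    rw [this]; exact tendsto_const_nhds
  have := hwt.comp htc2
  exact tendsto_nhds_unique hconst this

theorem prop_mu (l : ℝ) (hl : l ≠ 0) (V : ℤ → ℂ) (c d : ℤ → ℂ)
    (hc : ∀ k, (l:ℂ) * (c (k+2) + c (k-2)) = V k * c k)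
    (hd : ∀ k, (l:ℂ) * (d (k+2) + d (k-2)) = V k * d k)
    (k₀ : ℤ) (h0 : c k₀ ≠ 0)
    (hw : ∀ k, c k * d (k+2) - c (k+2) * d k = 0) :
    ∀ n : ℤ, d (k₀ + 2*n) = (d k₀ / c k₀) * c (k₀ + 2*n)
      ∧ d (k₀ + 2*n + 2) = (d k₀ / c k₀) * c (k₀ + 2*n + 2) := by
  have hlC : (l:ℂ) ≠ 0 := by exact_mod_cast hl
  intro n
  induction n using Int.induction_on with
  | zero =>
    norm_num
    constructor
    · field_simp
    · rw [div_mul_eq_mul_div, eq_div_iff h0]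
      linear_combination hw k₀
  | succ m ih =>
    obtain ⟨ih1, ih2⟩ := ih
    have e1 : k₀ + 2*((m:ℤ)+1) = k₀ + 2*(m:ℤ) + 2 := by ring
    rw [e1]
    refine ⟨ih2, ?_⟩
    have h1 := hc (k₀ + 2*(m:ℤ) + 2)
    have h2 := hd (k₀ + 2*(m:ℤ) + 2)
    have e3 : k₀ + 2*(m:ℤ) + 2 - 2 = k₀ + 2*(m:ℤ) := by ring
    rw [e3] at h1 h2
    have key : (l:ℂ) * d (k₀ + 2*(m:ℤ) + 2 + 2) = (l:ℂ) * ((d k₀ / c k₀) * c (k₀ + 2*(m:ℤ) + 2 + 2)) := by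
      linear_combination h2 - (d k₀ / c k₀) * h1 + V (k₀ + 2*(m:ℤ) + 2) * ih2 - (l:ℂ) * ih1
    exact mul_left_cancel₀ hlC key
  | pred m ih =>
    obtain ⟨ih1, ih2⟩ := ih
    have e1 : k₀ + 2*(-(m:ℤ)-1) + 2 = k₀ + 2*(-(m:ℤ)) := by ring
    rw [e1]
    refine ⟨?_, ih1⟩
    have h1 := hc (k₀ + 2*(-(m:ℤ)))
    have h2 := hd (k₀ + 2*(-(m:ℤ)))
    have e3 : k₀ + 2*(-(m:ℤ)-1) = k₀ + 2*(-(m:ℤ)) - 2 := by ring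
    rw [e3]
    have e4 : k₀ + 2*(-(m:ℤ)) + 2 = k₀ + 2*(-(m:ℤ):ℤ) + 2 := rfl
    have key : (l:ℂ) * d (k₀ + 2*(-(m:ℤ)) - 2) = (l:ℂ) * ((d k₀ / c k₀) * c (k₀ + 2*(-(m:ℤ)) - 2)) := by
      linear_combination h2 - (d k₀ / c k₀) * h1 + V (k₀ + 2*(-(m:ℤ))) * ih1 - (l:ℂ) * ih2
    exact mul_left_cancel₀ hlC key

theorem core (a E' l : ℝ) (hl : l ≠ 0) (p : ℤ) (u v : ℝ → ℂ)
    (hu : Continuous u) (hv : Continuous v)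
    (hup : Function.Periodic u 2) (hvp : Function.Periodic v 2)
    (hue : ∀ x : ℝ, ((E' : ℂ) - 2*(l:ℂ)*(Real.cos (2*Real.pi*x) : ℂ)) * u x = u (x + a) + u (x - a))
    (hve : ∀ x : ℝ, ((E' : ℂ) - 2*(l:ℂ)*(Real.cos (2*Real.pi*x) : ℂ)) * v x = v (x + a) + v (x - a))
    (hus : ∀ k : ℤ, ¬ (2 ∣ (k - p)) → fc u k = 0)
    (hvs : ∀ k : ℤ, ¬ (2 ∣ (k - p)) → fc v k = 0) :
    ∀ x : ℝ, u x * v (x - a) - v x * u (x - a) = 0 := by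
  set V : ℤ → ℂ := fun k => (E':ℂ) - 2 * Complex.cos (Real.pi * k * a) with hV
  have hc : ∀ k, (l:ℂ) * (fc u (k+2) + fc u (k-2)) = V k * fc u k :=
    fun k => coeff_rec a E' l u hu hup hue k
  have hd : ∀ k, (l:ℂ) * (fc v (k+2) + fc v (k-2)) = V k * fc v k :=
    fun k => coeff_rec a E' l v hv hvp hve k
  have hw := wr_zero l hl V (fc u) (fc v) hc hd (fc_tendsto u hu hup) (fc_tendsto v hv hvp)
  by_cases hz : ∀ k, fc u k = 0
  · have h0 := fc_eq_zero u hu hup hz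
    intro x; rw [h0 x, h0 (x - a)]; ring
  · push_neg at hz
    obtain ⟨k₀, h0⟩ := hz
    set μ := fc v k₀ / fc u k₀ with hμ
    have hprop := prop_mu l hl V (fc u) (fc v) hc hd k₀ h0 hw
    have hall : ∀ k, fc v k = μ * fc u k := by
      intro k
      by_cases hpar : (2 : ℤ) ∣ (k - k₀)
      · obtain ⟨n, hn⟩ := hpar
        have hk : k = k₀ + 2*n := by omega
        rw [hk]; exact (hprop n).1
      · have hk0p : (2 : ℤ) ∣ (k₀ - p) := by
          by_contra hcon
          exact h0 (hus k₀ hcon)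
        have hkp : ¬ (2 : ℤ) ∣ (k - p) := by
          obtain ⟨t, ht⟩ := hk0p
          intro ⟨s, hs⟩
          exact hpar ⟨s - t, by omega⟩
        rw [hvs k hkp, hus k hkp]; ring
    have hdiff : ∀ x, v x = μ * u x := by
      have hz2 : ∀ k, fc (fun x => v x + (-μ) * u x) k = 0 := by
        intro k
        rw [fc_add v (fun x => (-μ) * u x) hv (continuous_const.mul hu) k, fc_const_mul, hall k]; ring
      have := fc_eq_zero (fun x => v x + (-μ) * u x) (hv.add (continuous_const.mul hu))
        (fun x => by simp only []; rw [hvp x, hup x]) hz2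
      intro x
      have hx := this x
      linear_combination hx
    intro x
    rw [hdiff x, hdiff (x - a)]; ring

theorem exp_pik (k : ℤ) : Complex.exp (Real.pi * Complex.I * k * ((1:ℝ):ℂ)) = (-1:ℂ)^k := by
  rw [Complex.ofReal_one, mul_one, show (Real.pi:ℂ)*Complex.I*k = (k:ℂ)*(Real.pi*Complex.I) by ring,
    Complex.exp_int_mul, Complex.exp_pi_mul_I]

theorem supp_even (w : ℝ → ℂ) (hw : Continuous w) (hwp : Function.Periodic w 2) (k : ℤ)
    (hk : ¬ ((2:ℤ) ∣ (k - 0))) : fc (fun x => (w x + w (x+1))/2) k = 0 := by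
  have hodd : Odd k := by
    rw [Int.not_even_iff_odd.symm, even_iff_two_dvd]
    simpa using hk
  have hrw : (fun x => (w x + w (x+1))/2) = fun x => (1/2:ℂ) * (w x + w (x+1)) := by
    funext x; ring
  rw [hrw, fc_const_mul, fc_add w (fun x => w (x+1)) hw (hw.comp (continuous_id.add continuous_const)) k,
    fc_shift w hw hwp 1 k, exp_pik, hodd.neg_one_zpow]
  ring

theorem supp_odd (w : ℝ → ℂ) (hw : Continuous w) (hwp : Function.Periodic w 2) (k : ℤ)
    (hk : ¬ ((2:ℤ) ∣ (k - 1))) : fc (fun x => (w x - w (x+1))/2) k = 0 := by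
  have heven : Even k := by
    rw [even_iff_two_dvd]
    omega
  have hrw : (fun x => (w x - w (x+1))/2) = fun x => (1/2:ℂ) * (w x + (-1:ℂ) * w (x+1)) := by
    funext x; ring
  rw [hrw, fc_const_mul, fc_add w (fun x => (-1:ℂ) * w (x+1)) hw ((continuous_const).mul (hw.comp (continuous_id.add continuous_const))) k,
    fc_const_mul, fc_shift w hw hwp 1 k, exp_pik, heven.neg_one_zpow]
  ring

theorem per2 (B : ℝ → Matrix (Fin 2) (Fin 2) ℝ)
    (hcont : ∀ i j, Continuous fun x => B x i j)
    (hdet : ∀ x, (B x).det = 1)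
    (hper : ∀ x : ℝ, B (x + 1) = B x ∨ B (x + 1) = -B x) :
    ∀ x, B (x + 2) = B x := by
  set s : ℝ → ℝ := fun x => (B (x+1) 0 0 * B x 1 1 + B x 0 0 * B (x+1) 1 1
    - B (x+1) 0 1 * B x 1 0 - B (x+1) 1 0 * B x 0 1)/2 with hs
  have hdet2 : ∀ x, B x 0 0 * B x 1 1 - B x 0 1 * B x 1 0 = 1 := by
    intro x; have := hdet x; rwa [Matrix.det_fin_two] at this
  have hcases : ∀ x, (B (x+1) = B x ∧ s x = 1) ∨ (B (x+1) = -B x ∧ s x = -1) := by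
    intro x
    rcases hper x with h | h
    · left
      refine ⟨h, ?_⟩
      simp only [hs, h]
      have := hdet2 x; linarith
    · right
      refine ⟨h, ?_⟩
      simp only [hs, h, Matrix.neg_apply]
      have := hdet2 x; linarith
  have hscont : Continuous s := by
    apply Continuous.div_const
    have c1 : ∀ i j : Fin 2, Continuous fun x => B (x+1) i j := fun i j =>
      (hcont i j).comp (continuous_id.add continuous_const)
    continuity
  have hconst : ∀ x y : ℝ, s x = s y := by
    intro x y
    by_contra hne
    have hx : s x = 1 ∨ s x = -1 := by rcases hcases x with ⟨_, h⟩ | ⟨_, h⟩ <;> [left; right] <;> exact h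
    have hy : s y = 1 ∨ s y = -1 := by rcases hcases y with ⟨_, h⟩ | ⟨_, h⟩ <;> [left; right] <;> exact h
    have h0 : (0:ℝ) ∈ uIcc (s x) (s y) := by
      rcases hx with h1 | h1 <;> rcases hy with h2 | h2 <;>
        first
        | (exfalso; exact hne (h1.trans h2.symm))
        | (rw [h1, h2]; simp [Set.mem_uIcc]; norm_num)
        | (rw [h1, h2]; simp [Set.mem_uIcc])
    have := intermediate_value_uIcc (a := x) (b := y) hscont.continuousOn
    obtain ⟨c, _, hc⟩ := this h0
    rcases hcases c with ⟨_, h⟩ | ⟨_, h⟩ <;> rw [hc] at h <;> norm_num at h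
  intro x
  have e : x + 1 + 1 = x + 2 := by ring
  rcases hcases x with ⟨h1, hsx⟩ | ⟨h1, hsx⟩ <;> rcases hcases (x+1) with ⟨h2, hsx1⟩ | ⟨h2, hsx1⟩
  · rw [e] at h2; rw [h2, h1]
  · exfalso; have := hconst x (x+1); rw [hsx, hsx1] at this; norm_num at this
  · exfalso; have := hconst x (x+1); rw [hsx, hsx1] at this; norm_num at this
  · rw [e] at h2; rw [h2, h1, neg_neg]

/-- the almost Mathieu cocycle S_{λ,E} cannot be analytically reduced to ±I
    by an analytic B : ℝ/ℤ → PSL(2,ℝ). -/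
theorem stmt9 (α : ℝ) (hα : Irrational α) (lam E : ℝ) (hlam : lam ≠ 0) :
    ¬ ∃ (B : ℝ → Matrix (Fin 2) (Fin 2) ℝ) (V : Matrix (Fin 2) (Fin 2) ℝ),
      (∀ i j, AnalyticOnNhd ℝ (fun x => B x i j) Set.univ) ∧
      (∀ x : ℝ, (B x).det = 1) ∧
      (∀ x : ℝ, B (x + 1) = B x ∨ B (x + 1) = -B x) ∧
      (V = 1 ∨ V = -1) ∧
      (∀ x : ℝ, (B (x + α))⁻¹ * !![E - 2 * lam * Real.cos (2 * Real.pi * x), -1; 1, 0] * B x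
        = V) := by
  rintro ⟨B, V, hA, hdet, hper, hV, hconj⟩
  -- continuity of entries
  have hcont : ∀ i j, Continuous fun x => B x i j := by
    intro i j
    rw [← continuousOn_univ]
    exact (hA i j).continuousOn
  have hB2 := per2 B hcont hdet hper
  -- sign and smul form of V
  obtain ⟨σ, hσ, hVσ⟩ : ∃ σ : ℝ, (σ = 1 ∨ σ = -1) ∧ V = σ • (1 : Matrix (Fin 2) (Fin 2) ℝ) := by
    rcases hV with h | h
    · exact ⟨1, Or.inl rfl, by rw [h]; simp⟩
    · exact ⟨-1, Or.inr rfl, by rw [h]; simp⟩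
  have hσ2 : σ * σ = 1 := by rcases hσ with h | h <;> rw [h] <;> norm_num
  -- multiply out the conjugation
  have hVB : ∀ x, (!![E - 2 * lam * Real.cos (2 * Real.pi * x), -1; 1, 0]
      : Matrix (Fin 2) (Fin 2) ℝ) * B x = σ • B (x + α) := by
    intro x
    have hdu : IsUnit (B (x+α)).det := by rw [hdet]; exact isUnit_one
    have h2 := congrArg (fun M => B (x + α) * M) (hconj x)
    rw [← Matrix.mul_assoc, ← Matrix.mul_assoc, Matrix.mul_nonsing_inv _ hdu, Matrix.one_mul] at h2
    rw [h2, hVσ, Matrix.mul_smul, Matrix.mul_one]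
  -- entry equations
  have hrow1 : ∀ (x : ℝ) (j : Fin 2), B x 0 j = σ * B (x+α) 1 j := by
    intro x j
    have := congrFun (congrFun (hVB x) 1) j
    simpa [Matrix.mul_apply, Fin.sum_univ_two, Matrix.smul_apply, smul_eq_mul] using this
  have hrow0 : ∀ (x : ℝ) (j : Fin 2),
      (E - 2 * lam * Real.cos (2 * Real.pi * x)) * B x 0 j - B x 1 j = σ * B (x+α) 0 j := by
    intro x j
    have := congrFun (congrFun (hVB x) 0) j
    simp [Matrix.mul_apply, Fin.sum_univ_two, Matrix.smul_apply, smul_eq_mul] at this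
    linarith [this]
  set f : Fin 2 → ℝ → ℝ := fun j x => B x 0 j with hf
  have hfp : ∀ j x, f j (x + 2) = f j x := by
    intro j x; simp only [hf]; rw [hB2 x]
  have hfc : ∀ j, Continuous (f j) := fun j => hcont 0 j
  have hB1 : ∀ (x : ℝ) (j : Fin 2), B x 1 j = σ * f j (x - α) := by
    intro x j
    have h := hrow1 (x - α) j
    rw [sub_add_cancel] at h
    simp only [hf]
    linear_combination (-σ) * h - B x 1 j * hσ2
  have hfe : ∀ (j : Fin 2) (x : ℝ),
      (σ*E - 2*(σ*lam) * Real.cos (2*Real.pi*x)) * f j x = f j (x + α) + f j (x - α) := by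
    intro j x
    have h := hrow0 x j
    rw [hB1 x j] at h
    have h2 : (E - 2 * lam * Real.cos (2 * Real.pi * x)) * f j x - σ * f j (x - α)
        = σ * f j (x + α) := by
      simp only [hf] at h ⊢; exact h
    linear_combination σ * h2 + (f j (x + α) + f j (x - α)) * hσ2
  have hWr : ∀ x : ℝ, f 0 x * f 1 (x - α) - f 1 x * f 0 (x - α) = σ := by
    intro x
    have hd := hdet x
    rw [Matrix.det_fin_two] at hd
    rw [hB1 x 0, hB1 x 1] at hd
    simp only [hf] at hd ⊢
    linear_combination σ * hd - (B x 0 0 * (B (x-α) 0 1) - B x 0 1 * (B (x-α) 0 0)) * hσ2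
  -- even and odd parts
  set g : Fin 2 → ℝ → ℝ := fun j x => (f j x + f j (x+1))/2 with hg
  set p : Fin 2 → ℝ → ℝ := fun j x => (f j x - f j (x+1))/2 with hp
  have hgs : ∀ (j : Fin 2) (x : ℝ), g j (x+1) = g j x := by
    intro j x
    simp only [hg]
    rw [show x+1+1 = x+2 by ring, hfp j x]
    ring
  have hps : ∀ (j : Fin 2) (x : ℝ), p j (x+1) = - p j x := by
    intro j x
    simp only [hp]
    rw [show x+1+1 = x+2 by ring, hfp j x]
    ring
  have hgp : ∀ (j : Fin 2) (x : ℝ), g j (x+2) = g j x := by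
    intro j x
    rw [show x+2 = x+1+1 by ring, hgs, hgs]
  have hpp : ∀ (j : Fin 2) (x : ℝ), p j (x+2) = p j x := by
    intro j x
    rw [show x+2 = x+1+1 by ring, hps, hps, neg_neg]
  have hcosper : ∀ x : ℝ, Real.cos (2*Real.pi*(x+1)) = Real.cos (2*Real.pi*x) := by
    intro x
    rw [show 2*Real.pi*(x+1) = 2*Real.pi*x + 2*Real.pi by ring, Real.cos_add_two_pi]
  have hge : ∀ (j : Fin 2) (x : ℝ),
      (σ*E - 2*(σ*lam) * Real.cos (2*Real.pi*x)) * g j x = g j (x + α) + g j (x - α) := by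
    intro j x
    have h1 := hfe j x
    have h2 := hfe j (x+1)
    rw [hcosper] at h2
    simp only [hg]
    rw [show x+α+1 = x+1+α by ring, show x-α+1 = x+1-α by ring]
    linear_combination (h1 + h2)/2
  have hpe : ∀ (j : Fin 2) (x : ℝ),
      (σ*E - 2*(σ*lam) * Real.cos (2*Real.pi*x)) * p j x = p j (x + α) + p j (x - α) := by
    intro j x
    have h1 := hfe j x
    have h2 := hfe j (x+1)
    rw [hcosper] at h2
    simp only [hp]
    rw [show x+α+1 = x+1+α by ring, show x-α+1 = x+1-α by ring]
    linear_combination (h1 - h2)/2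
  -- continuity
  have hgc : ∀ j, Continuous (g j) := by
    intro j
    exact (((hfc j).add ((hfc j).comp (continuous_id.add continuous_const))).div_const 2)
  have hpc : ∀ j, Continuous (p j) := by
    intro j
    exact (((hfc j).sub ((hfc j).comp (continuous_id.add continuous_const))).div_const 2)
  -- complexifications
  set ug : Fin 2 → ℝ → ℂ := fun j x => ((g j x : ℝ) : ℂ) with hug
  set up : Fin 2 → ℝ → ℂ := fun j x => ((p j x : ℝ) : ℂ) with hup
  set uf : Fin 2 → ℝ → ℂ := fun j x => ((f j x : ℝ) : ℂ) with huf
  have hufc : ∀ j, Continuous (uf j) := fun j => Complex.continuous_ofReal.comp (hfc j)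
  have hufp : ∀ j, Function.Periodic (uf j) 2 := fun j x => by
    simp only [huf]; rw [hfp]
  have hugc : ∀ j, Continuous (ug j) := fun j => Complex.continuous_ofReal.comp (hgc j)
  have hupc : ∀ j, Continuous (up j) := fun j => Complex.continuous_ofReal.comp (hpc j)
  have hugp : ∀ j, Function.Periodic (ug j) 2 := fun j x => by
    simp only [hug]; rw [hgp]
  have hupp : ∀ j, Function.Periodic (up j) 2 := fun j x => by
    simp only [hup]; rw [hpp]
  have huge : ∀ (j : Fin 2) (x : ℝ),
      (((σ*E : ℝ) : ℂ) - 2*((σ*lam : ℝ):ℂ)*(Real.cos (2*Real.pi*x) : ℂ)) * ug j x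
        = ug j (x + α) + ug j (x - α) := by
    intro j x
    simp only [hug]
    have h := hge j x
    push_cast
    have h' := congrArg (fun t : ℝ => (t : ℂ)) h
    push_cast at h'
    linear_combination h'
  have hupe : ∀ (j : Fin 2) (x : ℝ),
      (((σ*E : ℝ) : ℂ) - 2*((σ*lam : ℝ):ℂ)*(Real.cos (2*Real.pi*x) : ℂ)) * up j x
        = up j (x + α) + up j (x - α) := by
    intro j x
    simp only [hup]
    have h := hpe j x
    push_cast
    have h' := congrArg (fun t : ℝ => (t : ℂ)) h
    push_cast at h'
    linear_combination h'
  -- support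
  have hgsupp : ∀ (j : Fin 2) (k : ℤ), ¬ ((2:ℤ) ∣ (k - 0)) → fc (ug j) k = 0 := by
    intro j k hk
    have hfun : ug j = fun x => (uf j x + uf j (x+1))/2 := by
      funext x; simp only [hug, huf, hg]; push_cast; ring
    rw [hfun]
    exact supp_even (uf j) (hufc j) (hufp j) k hk
  have hpsupp : ∀ (j : Fin 2) (k : ℤ), ¬ ((2:ℤ) ∣ (k - 1)) → fc (up j) k = 0 := by
    intro j k hk
    have hfun : up j = fun x => (uf j x - uf j (x+1))/2 := by
      funext x; simp only [hup, huf, hp]; push_cast; ring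
    rw [hfun]
    exact supp_odd (uf j) (hufc j) (hufp j) k hk
  -- apply core
  have hσlam : σ * lam ≠ 0 := by
    rcases hσ with h | h <;> rw [h] <;> simpa using hlam
  have hWg := core α (σ*E) (σ*lam) hσlam 0 (ug 0) (ug 1) (hugc 0) (hugc 1) (hugp 0) (hugp 1)
    (huge 0) (huge 1) (hgsupp 0) (hgsupp 1)
  have hWp := core α (σ*E) (σ*lam) hσlam 1 (up 0) (up 1) (hupc 0) (hupc 1) (hupp 0) (hupp 1)
    (hupe 0) (hupe 1) (hpsupp 0) (hpsupp 1)
  have hWgr : ∀ x : ℝ, g 0 x * g 1 (x-α) - g 1 x * g 0 (x-α) = 0 := by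
    intro x
    have h := hWg x
    simp only [hug] at h
    exact_mod_cast h
  have hWpr : ∀ x : ℝ, p 0 x * p 1 (x-α) - p 1 x * p 0 (x-α) = 0 := by
    intro x
    have h := hWp x
    simp only [hup] at h
    exact_mod_cast h
  -- cross term
  have hC : ∀ x : ℝ, g 0 x * p 1 (x-α) + p 0 x * g 1 (x-α)
      - g 1 x * p 0 (x-α) - p 1 x * g 0 (x-α) = σ := by
    intro x
    have h1 := hWr x
    have h2 := hWgr x
    have h3 := hWpr x
    simp only [hg, hp] at h2 h3 ⊢
    linear_combination h1 - h2 - h3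
  have h2 := hC 1
  rw [show (1:ℝ) = 0 + 1 by norm_num, show (0:ℝ)+1-α = (0-α)+1 by ring] at h2
  simp only [hgs, hps] at h2
  have hss : σ + σ = 0 := by linear_combination -(hC 0) - h2
  rcases hσ with h | h <;> rw [h] at hss <;> norm_num at hss
end

section
/- Let U : ℝ → ℂ² be analytic in the strip |Im z| < η, nowhere vanishing there, with U(x+1) = U(x), and suppose the 2×2 matrix with columns U(z) and Ū(z) has identically zero determinant (where Ū(z) = Σ conj(a_n)e^{2πinz} if U(z) = Σ a_n e^{2πinz}). Then there exist an analytic function ψ with |ψ(x)| = 1 for real x and a real analytic vector-valued function W (i.e., W(x) ∈ ℝ² for x ∈ ℝ), analytic in |Im z| < η with W(x+1) = ±W(x), such that U = ψW. -/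
open Complex Set intervalIntegral
open scoped Interval



lemma strip_primitive {η : ℝ} {g : ℂ → ℂ}
    (hg : ∀ z : ℂ, |z.im| < η → DifferentiableAt ℂ g z) :
    ∃ F : ℂ → ℂ, ∀ z : ℂ, |z.im| < η → HasDerivAt F (g z) z := by
  refine ⟨fun z => (∫ t in (0:ℝ)..z.re, g t) +
      Complex.I * ∫ s in (0:ℝ)..z.im, g (z.re + s * Complex.I), ?_⟩
  intro z₀ hz₀
  have hη : 0 < η := lt_of_le_of_lt (abs_nonneg _) hz₀
  have habs : ∀ p q : ℝ, |p| < η → |q| < η → ∀ s ∈ uIcc p q, |s| < η := by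
    intro p q hp hq s hs
    rcases Set.mem_uIcc.mp hs with h | h <;> rw [abs_lt] <;> constructor <;>
      linarith [neg_abs_le p, le_abs_self q, neg_abs_le q, le_abs_self p,
        neg_abs_le q, le_abs_self p]
  have h0η : |(0:ℝ)| < η := by simpa using hη
  -- continuity of g along lines in the strip
  have hgr : Continuous fun t : ℝ => g t := by
    rw [continuous_iff_continuousAt]
    intro t
    have h1 : DifferentiableAt ℂ g (t : ℂ) := hg _ (by simp [hη])
    have hcomp : ContinuousAt (g ∘ fun t : ℝ => (t : ℂ)) t :=
      h1.continuousAt.comp Complex.continuous_ofReal.continuousAt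
    simpa [Function.comp_def] using hcomp
  have hgv : ∀ (x : ℝ) (a b : ℝ), (∀ s ∈ uIcc a b, |s| < η) →
      IntervalIntegrable (fun s : ℝ => g (x + s * Complex.I)) MeasureTheory.volume a b := by
    intro x a b hab
    apply ContinuousOn.intervalIntegrable
    intro s hs
    have h1 : DifferentiableAt ℂ g ((x : ℂ) + s * Complex.I) := hg _ (by simp [hab s hs])
    have hc : Continuous fun s : ℝ => (x:ℂ) + s * Complex.I := by fun_prop
    have hcomp : ContinuousAt (g ∘ fun s : ℝ => (x:ℂ) + s * Complex.I) s :=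
      ContinuousAt.comp (g := g) h1.continuousAt hc.continuousAt
    exact (by simpa [Function.comp_def] using hcomp : ContinuousAt _ s).continuousWithinAt
  have hgh : ∀ (y : ℝ), |y| < η → ∀ p q : ℝ,
      IntervalIntegrable (fun t : ℝ => g (t + y * Complex.I)) MeasureTheory.volume p q := by
    intro y hy p q
    apply Continuous.intervalIntegrable
    rw [continuous_iff_continuousAt]
    intro t
    have h1 : DifferentiableAt ℂ g ((t : ℂ) + y * Complex.I) := hg _ (by simp [hy])
    have hc : Continuous fun t : ℝ => (t:ℂ) + y * Complex.I := by fun_prop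
    have hcomp : ContinuousAt (g ∘ fun t : ℝ => (t:ℂ) + y * Complex.I) t :=
      ContinuousAt.comp (g := g) h1.continuousAt hc.continuousAt
    simpa [Function.comp_def] using hcomp
  rw [hasDerivAt_iff_isLittleO, Asymptotics.isLittleO_iff]
  intro ε hε
  obtain ⟨δ₀, hδ₀, hδ₀'⟩ := Metric.continuousAt_iff.mp (hg z₀ hz₀).continuousAt (ε/2) (by positivity)
  set δ := min (δ₀ / 2) ((η - |z₀.im|) / 2) with hδdef
  have hδpos : 0 < δ := lt_min (by positivity) (by linarith)
  filter_upwards [Metric.ball_mem_nhds z₀ hδpos] with w hw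
  set a := z₀.re with ha
  set b := z₀.im with hb
  set c := w.re with hc
  set d := w.im with hd
  have hwz : ‖w - z₀‖ < δ := by rwa [Metric.mem_ball, dist_eq_norm] at hw
  have hca : |c - a| ≤ ‖w - z₀‖ := by
    have := Complex.abs_re_le_norm (w - z₀); simpa [Complex.sub_re] using this
  have hdb : |d - b| ≤ ‖w - z₀‖ := by
    have := Complex.abs_im_le_norm (w - z₀); simpa [Complex.sub_im] using this
  have hbη : |b| < η := hz₀
  have hδ1 : δ ≤ (η - |b|) / 2 := min_le_right _ _
  have hδ2 : δ ≤ δ₀ / 2 := min_le_left _ _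
  have hdη : |d| < η := by
    have h1 : |d| ≤ |d - b| + |b| := by
      calc |d| = |(d - b) + b| := by ring_nf
      _ ≤ |d - b| + |b| := abs_add_le _ _
    linarith
  -- Cauchy's theorem on the rectangle [a,c] × [0,b]
  have Hdiff : DifferentiableOn ℂ g
      ([[((a:ℂ)).re, ((⟨c, b⟩ : ℂ)).re]] ×ℂ [[((a:ℂ)).im, ((⟨c, b⟩ : ℂ)).im]]) := by
    intro u hu
    rw [Complex.mem_reProdIm] at hu
    have him : u.im ∈ uIcc (0:ℝ) b := by simpa using hu.2
    exact (hg u (habs 0 b h0η hbη _ him)).differentiableWithinAt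
  have hrect := Complex.integral_boundary_rect_eq_zero_of_differentiableOn g (a : ℂ)
    (⟨c, b⟩ : ℂ) Hdiff
  simp only [Complex.ofReal_re, Complex.ofReal_im, smul_eq_mul, Complex.ofReal_zero,
    zero_mul, add_zero] at hrect
  -- integrability facts
  have iH : ∀ x y : ℝ, IntervalIntegrable (fun t : ℝ => g t) MeasureTheory.volume x y :=
    fun x y => hgr.intervalIntegrable x y
  have i1 : IntervalIntegrable (fun s : ℝ => g (a + s * Complex.I)) MeasureTheory.volume 0 b :=
    hgv a 0 b (habs 0 b h0η hbη)
  have i2 : IntervalIntegrable (fun s : ℝ => g (c + s * Complex.I)) MeasureTheory.volume 0 b :=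
    hgv c 0 b (habs 0 b h0η hbη)
  have i3 : IntervalIntegrable (fun s : ℝ => g (c + s * Complex.I)) MeasureTheory.volume b d :=
    hgv c b d (habs b d hbη hdη)
  have e1 : (∫ t in (0:ℝ)..c, g t) = (∫ t in (0:ℝ)..a, g t) + ∫ t in a..c, g t :=
    (integral_add_adjacent_intervals (iH 0 a) (iH a c)).symm
  have e2 : (∫ s in (0:ℝ)..d, g (c + s * Complex.I))
      = (∫ s in (0:ℝ)..b, g (c + s * Complex.I)) + ∫ s in b..d, g (c + s * Complex.I) :=
    (integral_add_adjacent_intervals i2 i3).symm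
  have hwz2 : w - z₀ = (↑(c - a) + ↑(d - b) * Complex.I : ℂ) := by
    apply Complex.ext <;> simp [ha, hb, hc, hd]
  have s1 : (∫ t in a..c, (g (t + b * Complex.I) - g z₀))
      = (∫ t in a..c, g (t + b * Complex.I)) - ↑(c - a) * g z₀ := by
    rw [intervalIntegral.integral_sub (hgh b hbη a c) intervalIntegrable_const,
      intervalIntegral.integral_const, Complex.real_smul]
  have s2 : (∫ s in b..d, (g (c + s * Complex.I) - g z₀))
      = (∫ s in b..d, g (c + s * Complex.I)) - ↑(d - b) * g z₀ := by
    rw [intervalIntegral.integral_sub i3 intervalIntegrable_const,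
      intervalIntegral.integral_const, Complex.real_smul]
  have keyeq : ((∫ t in (0:ℝ)..c, g t) + Complex.I * ∫ s in (0:ℝ)..d, g (c + s * Complex.I))
      - ((∫ t in (0:ℝ)..a, g t) + Complex.I * ∫ s in (0:ℝ)..b, g (a + s * Complex.I))
      - (w - z₀) • g z₀
      = (∫ t in a..c, (g (t + b * Complex.I) - g z₀))
        + Complex.I * ∫ s in b..d, (g (c + s * Complex.I) - g z₀) := by
    rw [smul_eq_mul, hwz2, s1, s2]
    linear_combination e1 + Complex.I * e2 + hrect
  rw [keyeq]
  -- now estimate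
  have bnd1 : ‖∫ t in a..c, (g (t + b * Complex.I) - g z₀)‖ ≤ (ε/2) * |c - a| := by
    apply intervalIntegral.norm_integral_le_of_norm_le_const
    intro t ht
    have hta : |t - a| ≤ |c - a| := by
      rcases Set.mem_uIoc.mp ht with h | h <;> rw [abs_le] <;> constructor <;>
        linarith [neg_abs_le (c - a), le_abs_self (c - a)]
    have hdist : dist ((t : ℂ) + b * Complex.I) z₀ < δ₀ := by
      have : ((t : ℂ) + b * Complex.I) - z₀ = ((t - a : ℝ) : ℂ) := by
        apply Complex.ext <;> simp [ha, hb]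
      rw [dist_eq_norm, this, Complex.norm_real]
      calc |t - a| ≤ |c - a| := hta
        _ ≤ ‖w - z₀‖ := hca
        _ < δ := hwz
        _ ≤ δ₀ / 2 := hδ2
        _ < δ₀ := by linarith
    have := hδ₀' hdist
    rw [dist_eq_norm] at this
    linarith
  have bnd2 : ‖∫ s in b..d, (g (c + s * Complex.I) - g z₀)‖ ≤ (ε/2) * |d - b| := by
    apply intervalIntegral.norm_integral_le_of_norm_le_const
    intro s hs
    have hsb : |s - b| ≤ |d - b| := by
      rcases Set.mem_uIoc.mp hs with h | h <;> rw [abs_le] <;> constructor <;>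
        linarith [neg_abs_le (d - b), le_abs_self (d - b)]
    have hdist : dist ((c : ℂ) + s * Complex.I) z₀ < δ₀ := by
      have hsplit : ((c : ℂ) + s * Complex.I) - z₀
          = ((c - a : ℝ) : ℂ) + ((s - b : ℝ) : ℂ) * Complex.I := by
        apply Complex.ext <;> simp [ha, hb]
      rw [dist_eq_norm, hsplit]
      calc ‖((c - a : ℝ) : ℂ) + ((s - b : ℝ) : ℂ) * Complex.I‖
          ≤ ‖((c - a : ℝ) : ℂ)‖ + ‖((s - b : ℝ) : ℂ) * Complex.I‖ := norm_add_le _ _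
        _ = |c - a| + |s - b| := by
            rw [norm_mul, Complex.norm_I, mul_one, Complex.norm_real, Complex.norm_real,
              Real.norm_eq_abs, Real.norm_eq_abs]
        _ ≤ ‖w - z₀‖ + |d - b| := by linarith
        _ ≤ ‖w - z₀‖ + ‖w - z₀‖ := by linarith
        _ < δ + δ := by linarith
        _ ≤ δ₀ := by linarith
    have := hδ₀' hdist
    rw [dist_eq_norm] at this
    linarith
  calc ‖(∫ t in a..c, (g (t + b * Complex.I) - g z₀))
        + Complex.I * ∫ s in b..d, (g (c + s * Complex.I) - g z₀)‖
      ≤ ‖∫ t in a..c, (g (t + b * Complex.I) - g z₀)‖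
        + ‖Complex.I * ∫ s in b..d, (g (c + s * Complex.I) - g z₀)‖ := norm_add_le _ _
    _ = ‖∫ t in a..c, (g (t + b * Complex.I) - g z₀)‖
        + ‖∫ s in b..d, (g (c + s * Complex.I) - g z₀)‖ := by
        rw [norm_mul, Complex.norm_I, one_mul]
    _ ≤ (ε/2) * |c - a| + (ε/2) * |d - b| := by linarith
    _ ≤ (ε/2) * ‖w - z₀‖ + (ε/2) * ‖w - z₀‖ := by
        have h2 : 0 ≤ ε / 2 := by positivity
        have := mul_le_mul_of_nonneg_left hca h2
        have := mul_le_mul_of_nonneg_left hdb h2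
        linarith
    _ = ε * ‖w - z₀‖ := by ring



lemma hasDerivAt_conj_reflect {f : ℂ → ℂ} {z d : ℂ}
    (hf : HasDerivAt f d ((starRingEnd ℂ) z)) :
    HasDerivAt (fun w => (starRingEnd ℂ) (f ((starRingEnd ℂ) w))) ((starRingEnd ℂ) d) z := by
  rw [hasDerivAt_iff_isLittleO] at hf ⊢
  have hconj : Filter.Tendsto (fun w : ℂ => (starRingEnd ℂ) w) (nhds z)
      (nhds ((starRingEnd ℂ) z)) := Complex.continuous_conj.tendsto z
  have h1 := hf.comp_tendsto hconj
  rw [← Asymptotics.isLittleO_norm_norm] at h1 ⊢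
  refine h1.congr (fun w => ?_) (fun w => ?_)
  · simp only [Function.comp_apply]
    have heq : (starRingEnd ℂ) (f ((starRingEnd ℂ) w)) - (starRingEnd ℂ) (f ((starRingEnd ℂ) z))
        - (w - z) • (starRingEnd ℂ) d
        = (starRingEnd ℂ) (f ((starRingEnd ℂ) w) - f ((starRingEnd ℂ) z)
          - ((starRingEnd ℂ) w - (starRingEnd ℂ) z) • d) := by
      simp only [smul_eq_mul, map_sub, map_mul, Complex.conj_conj]
    rw [heq, RCLike.norm_conj]
  · simp only [Function.comp_apply]
    have heq : (w : ℂ) - z = (starRingEnd ℂ) ((starRingEnd ℂ) w - (starRingEnd ℂ) z) := by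
      simp [map_sub]
    rw [heq, RCLike.norm_conj]



lemma strip_preconnected {η : ℝ} : IsPreconnected {z : ℂ | |z.im| < η} := by
  have hconv : Convex ℝ {z : ℂ | |z.im| < η} := by
    intro x hx y hy s t hs ht hst
    simp only [Set.mem_setOf_eq] at *
    have : (s • x + t • y).im = s * x.im + t * y.im := by
      simp [Complex.add_im, Complex.smul_im]
    rw [this]
    calc |s * x.im + t * y.im| ≤ |s * x.im| + |t * y.im| := abs_add_le _ _
      _ = s * |x.im| + t * |y.im| := by
          rw [abs_mul, abs_mul, _root_.abs_of_nonneg hs, _root_.abs_of_nonneg ht]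
      _ < s * η + t * η := by
          rcases eq_or_lt_of_le hs with h | h
          · rcases eq_or_lt_of_le ht with h' | h'
            · exfalso; rw [← h, ← h'] at hst; simpa using hst
            · rw [← h]; simpa using (mul_lt_mul_of_pos_left hy h')
          · rcases eq_or_lt_of_le ht with h' | h'
            · rw [← h']; simpa using (mul_lt_mul_of_pos_left hx h)
            · have := mul_lt_mul_of_pos_left hx h
              have := mul_le_mul_of_nonneg_left (le_of_lt hy) ht
              linarith
      _ = η := by rw [← add_mul, hst, one_mul]
  exact hconv.isPreconnected

-- identity theorem from values on ℝ
lemma eqOn_strip_of_real {η : ℝ} (hη : 0 < η) {f g : ℂ → ℂ}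
    (hf : AnalyticOnNhd ℂ f {z : ℂ | |z.im| < η}) (hg : AnalyticOnNhd ℂ g {z : ℂ | |z.im| < η})
    (h : ∀ x : ℝ, f x = g x) : Set.EqOn f g {z : ℂ | |z.im| < η} := by
  apply hf.eqOn_of_preconnected_of_frequently_eq hg strip_preconnected
    (z₀ := 0) (by simp [hη])
  have htend : Filter.Tendsto (fun n : ℕ => ((1 / (n + 1) : ℝ) : ℂ)) Filter.atTop
      (nhdsWithin 0 {(0:ℂ)}ᶜ) := by
    rw [tendsto_nhdsWithin_iff]
    constructor
    · have : Filter.Tendsto (fun n : ℕ => (1 / (n + 1) : ℝ)) Filter.atTop (nhds 0) :=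
        tendsto_one_div_add_atTop_nhds_zero_nat
      have h2 := (Complex.continuous_ofReal.tendsto 0).comp this
      simpa only [Function.comp_def, Complex.ofReal_zero, one_div, Complex.ofReal_inv,
        Complex.ofReal_add, Complex.ofReal_natCast, Complex.ofReal_one] using h2
    · filter_upwards with n
      simp only [Set.mem_compl_iff, Set.mem_singleton_iff]
      intro hc
      have : (1 / (n + 1) : ℝ) = 0 := by exact_mod_cast congrArg Complex.re hc
      have : (0:ℝ) < 1 / (n + 1) := by positivity
      linarith [‹(1 / (n + 1) : ℝ) = 0›]
  exact htend.frequently (Filter.Frequently.of_forall fun n => h _)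



lemma strip_convex {η : ℝ} : Convex ℝ {z : ℂ | |z.im| < η} := by
  intro x hx y hy s t hs ht hst
  simp only [Set.mem_setOf_eq] at *
  have him : (s • x + t • y).im = s * x.im + t * y.im := by
    simp [Complex.add_im, Complex.smul_im]
  rw [him]
  calc |s * x.im + t * y.im| ≤ |s * x.im| + |t * y.im| := abs_add_le _ _
    _ = s * |x.im| + t * |y.im| := by
        rw [abs_mul, abs_mul, _root_.abs_of_nonneg hs, _root_.abs_of_nonneg ht]
    _ < s * η + t * η := by
        rcases eq_or_lt_of_le hs with h | h
        · rcases eq_or_lt_of_le ht with h' | h'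
          · exfalso; rw [← h, ← h'] at hst; simpa using hst
          · rw [← h]; simpa using (mul_lt_mul_of_pos_left hy h')
        · rcases eq_or_lt_of_le ht with h' | h'
          · rw [← h']; simpa using (mul_lt_mul_of_pos_left hx h)
          · have := mul_lt_mul_of_pos_left hx h
            have := mul_le_mul_of_nonneg_left (le_of_lt hy) ht
            linarith
    _ = η := by rw [← add_mul, hst, one_mul]


lemma strip_sqrt {η : ℝ} (hη : 0 < η) {k : ℂ → ℂ}
    (hk : AnalyticOnNhd ℂ k {z : ℂ | |z.im| < η})
    (hk0 : ∀ z ∈ {z : ℂ | |z.im| < η}, k z ≠ 0) :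
    ∃ ψ : ℂ → ℂ, AnalyticOnNhd ℂ ψ {z : ℂ | |z.im| < η} ∧
      ∀ z ∈ {z : ℂ | |z.im| < η}, ψ z ^ 2 = k z := by
  have hSopen : IsOpen {z : ℂ | |z.im| < η} :=
    isOpen_lt (continuous_abs.comp Complex.continuous_im) continuous_const
  have hdk : AnalyticOnNhd ℂ (deriv k) {z : ℂ | |z.im| < η} := hk.deriv
  have hgd : ∀ z : ℂ, |z.im| < η → DifferentiableAt ℂ (fun z => deriv k z / k z) z := fun z hz =>
    ((hdk z hz).div (hk z hz) (hk0 z hz)).differentiableAt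
  obtain ⟨F, hF⟩ := strip_primitive hgd
  have h0 : (0:ℂ) ∈ {z : ℂ | |z.im| < η} := by simp [hη]
  -- h := k * exp(-F) has zero derivative on the strip
  have hderiv : ∀ z ∈ {z : ℂ | |z.im| < η},
      HasDerivAt (fun w => k w * Complex.exp (-F w)) 0 z := by
    intro z hz
    have h1 : HasDerivAt k (deriv k z) z := (hk z hz).differentiableAt.hasDerivAt
    have h2 : HasDerivAt (fun w => Complex.exp (-F w))
        (Complex.exp (-F z) * (-(deriv k z / k z))) z := by
      have h3 : HasDerivAt (fun w => -F w) (-(deriv k z / k z)) z := (hF z hz).neg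
      simpa [Function.comp_def] using (Complex.hasDerivAt_exp (-F z)).comp z h3
    have := h1.mul h2
    refine this.congr_deriv ?_
    rw [div_eq_mul_inv]
    linear_combination -(deriv k z * Complex.exp (-F z)) * mul_inv_cancel₀ (hk0 z hz)
  have hdiff : DifferentiableOn ℂ (fun w => k w * Complex.exp (-F w)) {z : ℂ | |z.im| < η} :=
    fun z hz => ((hderiv z hz).differentiableAt).differentiableWithinAt
  have hconst : ∀ z ∈ {z : ℂ | |z.im| < η},
      k z * Complex.exp (-F z) = k 0 * Complex.exp (-F 0) := by
    intro z hz
    apply strip_convex.is_const_of_fderivWithin_eq_zero hdiff _ hz h0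
    intro x hx
    rw [fderivWithin_of_isOpen hSopen hx]
    have := ((hderiv x hx).hasFDerivAt).fderiv
    rw [this]
    ext y
    simp
  obtain ⟨c, hcc⟩ : ∃ c : ℂ, c = k 0 * Complex.exp (-F 0) := ⟨_, rfl⟩
  rw [← hcc] at hconst
  have hcne : c ≠ 0 := by
    rw [hcc]; exact mul_ne_zero (hk0 0 h0) (Complex.exp_ne_zero _)
  refine ⟨fun z => Complex.exp ((Complex.log c + F z) / 2), ?_, ?_⟩
  · intro z hz
    apply AnalyticAt.comp (analyticAt_cexp)
    apply AnalyticAt.div _ analyticAt_const (by norm_num)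
    apply AnalyticAt.add analyticAt_const
    -- F is analytic: differentiable on open strip
    have : DifferentiableOn ℂ F {z : ℂ | |z.im| < η} :=
      fun w hw => (hF w hw).differentiableAt.differentiableWithinAt
    exact (this.analyticOnNhd hSopen) z hz
  · intro z hz
    have hkz := hconst z hz
    have h2 : Complex.exp ((Complex.log c + F z) / 2) ^ 2
        = Complex.exp (Complex.log c + F z) := by
      rw [← Complex.exp_nat_mul]
      congr 1
      push_cast
      ring
    rw [h2, Complex.exp_add, Complex.exp_log hcne]
    rw [Complex.exp_neg] at hkz
    have hene : Complex.exp (F z) ≠ 0 := Complex.exp_ne_zero _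
    field_simp at hkz
    linear_combination -hkz

/-- if U : ℝ/ℤ → ℂ² is analytic and nonvanishing in the strip |Im z| < η and
    the matrix with columns U and Ū (the coefficient-conjugate reflection, i.e. the analytic
    continuation of x ↦ conj(U(x))) has identically zero determinant, then U = ψW with ψ
    unimodular on ℝ and W real analytic with W(x+1) = ±W(x). -/
theorem stmt19 (η : ℝ) (hη : 0 < η) (U Ubar : ℂ → ℂ × ℂ)
    (hUan : AnalyticOnNhd ℂ (fun z => (U z).1) {z : ℂ | |z.im| < η} ∧
            AnalyticOnNhd ℂ (fun z => (U z).2) {z : ℂ | |z.im| < η})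
    (hUper : ∀ z : ℂ, U (z + 1) = U z)
    (hUne : ∀ z ∈ {z : ℂ | |z.im| < η}, U z ≠ 0)
    (hUbaran : AnalyticOnNhd ℂ (fun z => (Ubar z).1) {z : ℂ | |z.im| < η} ∧
               AnalyticOnNhd ℂ (fun z => (Ubar z).2) {z : ℂ | |z.im| < η})
    (hUbar : ∀ x : ℝ, Ubar x = ((starRingEnd ℂ) (U x).1, (starRingEnd ℂ) (U x).2))
    (hdet : ∀ z ∈ {z : ℂ | |z.im| < η}, (U z).1 * (Ubar z).2 - (U z).2 * (Ubar z).1 = 0) :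
    ∃ (ψ : ℂ → ℂ) (W : ℂ → ℂ × ℂ),
      AnalyticOnNhd ℂ ψ {z : ℂ | |z.im| < η} ∧
      (∀ x : ℝ, ‖ψ x‖ = 1) ∧
      AnalyticOnNhd ℂ (fun z => (W z).1) {z : ℂ | |z.im| < η} ∧
      AnalyticOnNhd ℂ (fun z => (W z).2) {z : ℂ | |z.im| < η} ∧
      (∀ x : ℝ, ((W x).1).im = 0 ∧ ((W x).2).im = 0) ∧
      (∀ z : ℂ, W (z + 1) = W z ∨ W (z + 1) = -W z) ∧
      ∀ z ∈ {z : ℂ | |z.im| < η}, U z = (ψ z * (W z).1, ψ z * (W z).2) := by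
  have hSopen : IsOpen {z : ℂ | |z.im| < η} :=
    isOpen_lt (continuous_abs.comp Complex.continuous_im) continuous_const
  have hmemS : ∀ x : ℝ, ((x : ℂ)) ∈ {z : ℂ | |z.im| < η} := fun x => by simp [hη]
  have hconjS : ∀ z ∈ {z : ℂ | |z.im| < η}, (starRingEnd ℂ) z ∈ {z : ℂ | |z.im| < η} := by
    intro z hz
    simp only [Set.mem_setOf_eq, Complex.conj_im, abs_neg]
    exact hz
  -- the coefficient-conjugate reflection formula : Ubar z = conj (U (conj z))
  have hrefl : ∀ (f : ℂ → ℂ), AnalyticOnNhd ℂ f {z : ℂ | |z.im| < η} →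
      AnalyticOnNhd ℂ (fun z => (starRingEnd ℂ) (f ((starRingEnd ℂ) z))) {z : ℂ | |z.im| < η} := by
    intro f hf
    apply DifferentiableOn.analyticOnNhd _ hSopen
    intro z hz
    have h1 : AnalyticAt ℂ f ((starRingEnd ℂ) z) := hf _ (hconjS z hz)
    exact (hasDerivAt_conj_reflect h1.differentiableAt.hasDerivAt).differentiableAt.differentiableWithinAt
  have hV1 : ∀ z ∈ {z : ℂ | |z.im| < η},
      (Ubar z).1 = (starRingEnd ℂ) ((U ((starRingEnd ℂ) z)).1) := by
    intro z hz
    exact eqOn_strip_of_real hη hUbaran.1 (hrefl _ hUan.1)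
      (fun x => by rw [hUbar x]; simp [Complex.conj_ofReal]) hz
  have hV2 : ∀ z ∈ {z : ℂ | |z.im| < η},
      (Ubar z).2 = (starRingEnd ℂ) ((U ((starRingEnd ℂ) z)).2) := by
    intro z hz
    exact eqOn_strip_of_real hη hUbaran.2 (hrefl _ hUan.2)
      (fun x => by rw [hUbar x]; simp [Complex.conj_ofReal]) hz
  have hUbarne : ∀ z ∈ {z : ℂ | |z.im| < η}, ¬((Ubar z).1 = 0 ∧ (Ubar z).2 = 0) := by
    rintro z hz ⟨h1, h2⟩
    rw [hV1 z hz] at h1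
    rw [hV2 z hz] at h2
    apply hUne _ (hconjS z hz)
    rw [Prod.ext_iff]
    constructor
    · simpa using h1
    · simpa using h2
  have hS1 : ∀ z : ℂ, z ∈ {z : ℂ | |z.im| < η} → z + 1 ∈ {z : ℂ | |z.im| < η} := by
    intro z hz
    simpa using hz
  have hUbarper : ∀ z ∈ {z : ℂ | |z.im| < η}, Ubar (z + 1) = Ubar z := by
    intro z hz
    have hz1 := hS1 z hz
    have hconj1 : (starRingEnd ℂ) (z + 1) = (starRingEnd ℂ) z + 1 := by
      rw [map_add, map_one]
    apply Prod.ext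
    · rw [hV1 _ hz1, hV1 _ hz, hconj1, hUper]
    · rw [hV2 _ hz1, hV2 _ hz, hconj1, hUper]
  have hdet' : ∀ z ∈ {z : ℂ | |z.im| < η}, (U z).1 * (Ubar z).2 = (U z).2 * (Ubar z).1 :=
    fun z hz => by linear_combination hdet z hz
  set k : ℂ → ℂ := fun z => if (Ubar z).1 = 0 then (U z).2 / (Ubar z).2 else (U z).1 / (Ubar z).1
    with hkdef
  have hkU : ∀ z ∈ {z : ℂ | |z.im| < η},
      (U z).1 = k z * (Ubar z).1 ∧ (U z).2 = k z * (Ubar z).2 := by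
    intro z hz
    by_cases h : (Ubar z).1 = 0
    · have h2 : (Ubar z).2 ≠ 0 := fun hh => hUbarne z hz ⟨h, hh⟩
      have hU1 : (U z).1 = 0 := by
        have hd := hdet' z hz
        rw [h, mul_zero] at hd
        exact (mul_eq_zero.mp hd).resolve_right h2
      simp only [hkdef, if_pos h]
      refine ⟨by rw [hU1, h, mul_zero], by field_simp⟩
    · simp only [hkdef, if_neg h]
      constructor
      · field_simp
      · rw [div_mul_eq_mul_div, eq_div_iff h]
        linear_combination -hdet' z hz
  have hkne : ∀ z ∈ {z : ℂ | |z.im| < η}, k z ≠ 0 := by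
    intro z hz hk0
    apply hUne z hz
    rw [Prod.ext_iff]
    have h1 := (hkU z hz).1
    have h2 := (hkU z hz).2
    rw [hk0, zero_mul] at h1 h2
    exact ⟨h1, h2⟩
  have hkan : AnalyticOnNhd ℂ k {z : ℂ | |z.im| < η} := by
    intro z hz
    have hSev : ∀ᶠ w in nhds z, w ∈ {z : ℂ | |z.im| < η} := hSopen.eventually_mem hz
    by_cases h : (Ubar z).1 = 0
    · have h2 : (Ubar z).2 ≠ 0 := fun hh => hUbarne z hz ⟨h, hh⟩
      have hne : ∀ᶠ w in nhds z, (Ubar w).2 ≠ 0 :=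
        (hUbaran.2 z hz).continuousAt.eventually_ne h2
      have heq : (fun w => (U w).2 / (Ubar w).2) =ᶠ[nhds z] k := by
        filter_upwards [hne, hSev] with w h2w hSw
        by_cases h1w : (Ubar w).1 = 0
        · simp only [hkdef, if_pos h1w]
        · simp only [hkdef, if_neg h1w]
          rw [div_eq_div_iff h2w h1w]
          linear_combination -hdet' w hSw
      exact ((hUan.2 z hz).div (hUbaran.2 z hz) h2).congr heq
    · have hne : ∀ᶠ w in nhds z, (Ubar w).1 ≠ 0 :=
        (hUbaran.1 z hz).continuousAt.eventually_ne h
      have heq : (fun w => (U w).1 / (Ubar w).1) =ᶠ[nhds z] k := by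
        filter_upwards [hne] with w h1w
        simp only [hkdef, if_neg h1w]
      exact ((hUan.1 z hz).div (hUbaran.1 z hz) h).congr heq
  have hkper : ∀ z ∈ {z : ℂ | |z.im| < η}, k (z + 1) = k z := by
    intro z hz
    simp only [hkdef, hUbarper z hz, hUper z]
  have hkabs : ∀ x : ℝ, ‖k x‖ = 1 := by
    intro x
    have hU1c : (Ubar (x:ℂ)).1 = (starRingEnd ℂ) (U (x:ℂ)).1 := by rw [hUbar x]
    have hU2c : (Ubar (x:ℂ)).2 = (starRingEnd ℂ) (U (x:ℂ)).2 := by rw [hUbar x]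
    by_cases h : (Ubar (x:ℂ)).1 = 0
    · have hU1 : (U (x:ℂ)).1 = 0 := by
        rw [hU1c] at h; simpa using h
      have hU2 : (U (x:ℂ)).2 ≠ 0 := by
        intro hh
        exact hUne _ (hmemS x) (Prod.ext_iff.mpr ⟨hU1, hh⟩)
      simp only [hkdef, if_pos h]
      rw [hU2c, norm_div, Complex.norm_conj, div_self]
      simpa using hU2
    · have hU1 : (U (x:ℂ)).1 ≠ 0 := by
        intro hh
        apply h
        rw [hU1c, hh, map_zero]
      simp only [hkdef, if_neg h]
      rw [hU1c, norm_div, Complex.norm_conj, div_self]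
      simpa using hU1
  obtain ⟨ψ, hψan, hψsq⟩ := strip_sqrt hη hkan hkne
  have hψne : ∀ z ∈ {z : ℂ | |z.im| < η}, ψ z ≠ 0 := by
    intro z hz h0
    apply hkne z hz
    rw [← hψsq z hz, h0]
    ring
  have hψabs : ∀ x : ℝ, ‖ψ (x:ℂ)‖ = 1 := by
    intro x
    have h1 : (‖ψ (x:ℂ)‖)^2 = 1 := by
      rw [← norm_pow, hψsq _ (hmemS x), hkabs x]
    have h2 : (‖ψ (x:ℂ)‖ - 1) * (‖ψ (x:ℂ)‖ + 1) = 0 := by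
      linear_combination h1
    rcases mul_eq_zero.mp h2 with h3 | h3
    · linarith [sub_eq_zero.mp h3]
    · linarith [norm_nonneg (ψ (x:ℂ)), h3]
  set W : ℂ → ℂ × ℂ :=
    fun z => if |z.im| < η then ((U z).1 / ψ z, (U z).2 / ψ z) else 0 with hWdef0
  have hWdef : ∀ z ∈ {z : ℂ | |z.im| < η}, W z = ((U z).1 / ψ z, (U z).2 / ψ z) := by
    intro z hz
    simp only [hWdef0]
    exact if_pos hz
  refine ⟨ψ, W, hψan, hψabs, ?_, ?_, ?_, ?_, ?_⟩
  · intro z hz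
    apply ((hUan.1 z hz).div (hψan z hz) (hψne z hz)).congr
    filter_upwards [hSopen.eventually_mem hz] with w hw
    rw [hWdef w hw]
    rfl
  · intro z hz
    apply ((hUan.2 z hz).div (hψan z hz) (hψne z hz)).congr
    filter_upwards [hSopen.eventually_mem hz] with w hw
    rw [hWdef w hw]
    rfl
  · -- real on ℝ
    intro x
    have hx := hmemS x
    have hψx : (starRingEnd ℂ) (ψ (x:ℂ)) = (ψ (x:ℂ))⁻¹ := by
      apply eq_inv_of_mul_eq_one_left
      rw [mul_comm, Complex.mul_conj, Complex.normSq_eq_norm_sq, hψabs x]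
      norm_num
    have hsq := hψsq _ hx
    have hkU' := hkU _ hx
    have hU1c : (Ubar (x:ℂ)).1 = (starRingEnd ℂ) (U (x:ℂ)).1 := by rw [hUbar x]
    have hU2c : (Ubar (x:ℂ)).2 = (starRingEnd ℂ) (U (x:ℂ)).2 := by rw [hUbar x]
    rw [hWdef _ hx]
    constructor
    · rw [← Complex.conj_eq_iff_im, map_div₀, hψx, div_inv_eq_mul, eq_div_iff (hψne _ hx)]
      have h1 := hkU'.1
      rw [← hsq, hU1c] at h1
      linear_combination -h1
    · rw [← Complex.conj_eq_iff_im, map_div₀, hψx, div_inv_eq_mul, eq_div_iff (hψne _ hx)]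
      have h1 := hkU'.2
      rw [← hsq, hU2c] at h1
      linear_combination -h1
  · -- periodicity up to sign
    intro z
    by_cases hz : z ∈ {z : ℂ | |z.im| < η}
    · have hz1 : z + 1 ∈ {z : ℂ | |z.im| < η} := hS1 z hz
      have hψ2 : ψ (z+1)^2 = ψ z^2 := by
        rw [hψsq _ hz1, hψsq _ hz, hkper z hz]
      have hfac : (ψ (z+1) - ψ z) * (ψ (z+1) + ψ z) = 0 := by linear_combination hψ2
      rcases mul_eq_zero.mp hfac with h3 | h3
      · left
        have h4 := sub_eq_zero.mp h3
        rw [hWdef _ hz1, hWdef _ hz, hUper, h4]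
      · right
        have h4 : ψ (z+1) = -ψ z := eq_neg_of_add_eq_zero_left h3
        rw [hWdef _ hz1, hWdef _ hz, hUper, h4]
        rw [Prod.ext_iff]
        constructor <;> simp [div_neg]
    · left
      have hz' : ¬ (|z.im| < η) := hz
      have hz1' : ¬ (|(z+1).im| < η) := fun hh => hz' (by simpa using hh)
      simp only [hWdef0]
      rw [if_neg hz1', if_neg hz']
  · intro z hz
    rw [hWdef z hz, Prod.ext_iff]
    constructor
    · simp only []
      rw [mul_comm, div_mul_cancel₀ _ (hψne z hz)]
    · simp only []
      rw [mul_comm, div_mul_cancel₀ _ (hψne z hz)]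
end
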